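/- arXiv:2001.04929 — 10 statements merged into one kernel-verified Lean document; each statement's English description precedes it below -/
import Mathlib

section
/- For every n ≥ 1, every field k and every unit v ∈ kˣ, the trigonometric R-matrix satisfies the Yang–Baxter equation with spectral parameters: R_trig;12(u,v') · R_trig;13(u,w) · R_trig;23(v',w) = R_trig;23(v',w) · R_trig;13(u,w) · R_trig;12(u,v'), as an identity of n³×n³ matrices with entries in the polynomial ring k[u,v',w]. -/
open Matrix MvPolynomial

noncomputable section

/-- The trigonometric R-matrix
`R_trig(z,w) = (vz − v⁻¹w)·∑ᵢ Eᵢᵢ⊗Eᵢᵢ + (z−w)·∑_{i≠j} Eᵢᵢ⊗Eⱼⱼ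
  + (v−v⁻¹)z·∑_{i<j} Eᵢⱼ⊗Eⱼᵢ + (v−v⁻¹)w·∑_{i>j} Eᵢⱼ⊗Eⱼᵢ`. -/
def Rtrig (n : ℕ) {k : Type*} [Field k] {A : Type*} [Ring A] [Algebra k A]
    (v : kˣ) (z w : A) : Matrix (Fin n × Fin n) (Fin n × Fin n) A :=
  Matrix.of fun x y =>
    (if x = y then
      (if x.1 = x.2 then algebraMap k A (v : k) * z - algebraMap k A ((v⁻¹ : kˣ) : k) * w
       else z - w)
     else 0) +
    (if x.1 = y.2 ∧ x.2 = y.1 ∧ x.1 ≠ x.2 then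
      (algebraMap k A (v : k) - algebraMap k A ((v⁻¹ : kˣ) : k)) *
        (if x.1 < x.2 then z else w)
     else 0)

/-- `S₁₂ = S ⊗ Id_n`. -/
def emb12 (n : ℕ) {R : Type*} [Ring R]
    (S : Matrix (Fin n × Fin n) (Fin n × Fin n) R) :
    Matrix (Fin n × Fin n × Fin n) (Fin n × Fin n × Fin n) R :=
  Matrix.of fun x y => S (x.1, x.2.1) (y.1, y.2.1) * (if x.2.2 = y.2.2 then 1 else 0)

/-- `S₁₃`: `(S₁₃)_{(i,j,k),(i',j',k')} = S_{(i,k),(i',k')} δ_{j,j'}`. -/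
def emb13 (n : ℕ) {R : Type*} [Ring R]
    (S : Matrix (Fin n × Fin n) (Fin n × Fin n) R) :
    Matrix (Fin n × Fin n × Fin n) (Fin n × Fin n × Fin n) R :=
  Matrix.of fun x y => S (x.1, x.2.2) (y.1, y.2.2) * (if x.2.1 = y.2.1 then 1 else 0)

/-- `S₂₃ = Id_n ⊗ S`. -/
def emb23 (n : ℕ) {R : Type*} [Ring R]
    (S : Matrix (Fin n × Fin n) (Fin n × Fin n) R) :
    Matrix (Fin n × Fin n × Fin n) (Fin n × Fin n × Fin n) R :=
  Matrix.of fun x y => (if x.1 = y.1 then 1 else 0) * S (x.2.1, x.2.2) (y.2.1, y.2.2)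


def Dco {R : Type*} [CommRing R] (a b z w : R) {n : ℕ} (s t : Fin n) : R :=
  if s = t then a * z - b * w else z - w

def Oco {R : Type*} [CommRing R] (a b z w : R) {n : ℕ} (s t : Fin n) : R :=
  if s = t then 0 else (a - b) * (if s < t then z else w)


section helpers

variable {κ : Type*} [Field κ] {A : Type*} [CommRing A] [Algebra κ A] (v : κˣ)

/-- Entries of `Rtrig` in terms of `Dco`/`Oco`. -/
lemma Rtrig_apply' (n : ℕ) (z w : A) (x y : Fin n × Fin n) :
    Rtrig n v z w x y =
      Dco (algebraMap κ A (v : κ)) (algebraMap κ A ((v⁻¹ : κˣ) : κ)) z w x.1 x.2 *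
        (if y = x then 1 else 0) +
      Oco (algebraMap κ A (v : κ)) (algebraMap κ A ((v⁻¹ : κˣ) : κ)) z w x.1 x.2 *
        (if y = (x.2, x.1) then 1 else 0) := by
  obtain ⟨a, b⟩ := x
  obtain ⟨c, d⟩ := y
  simp only [Rtrig, Dco, Oco, of_apply, Prod.mk.injEq, ne_eq]
  split_ifs <;> first | ring1 | (exfalso; omega)

/-- Row form of `emb12 (Rtrig …)`. -/
lemma emb12_row (n : ℕ) (z w : A) (x p : Fin n × Fin n × Fin n) :
    emb12 n (Rtrig n v z w) x p =
      Dco (algebraMap κ A (v : κ)) (algebraMap κ A ((v⁻¹ : κˣ) : κ)) z w x.1 x.2.1 *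
        (if p = x then 1 else 0) +
      Oco (algebraMap κ A (v : κ)) (algebraMap κ A ((v⁻¹ : κˣ) : κ)) z w x.1 x.2.1 *
        (if p = (x.2.1, x.1, x.2.2) then 1 else 0) := by
  obtain ⟨a, b, c⟩ := x
  obtain ⟨d, e, f⟩ := p
  simp only [emb12, of_apply, Rtrig_apply', Prod.mk.injEq]
  split_ifs <;> first | ring1 | (exfalso; omega)

lemma emb13_row (n : ℕ) (z w : A) (x p : Fin n × Fin n × Fin n) :
    emb13 n (Rtrig n v z w) x p =
      Dco (algebraMap κ A (v : κ)) (algebraMap κ A ((v⁻¹ : κˣ) : κ)) z w x.1 x.2.2 *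
        (if p = x then 1 else 0) +
      Oco (algebraMap κ A (v : κ)) (algebraMap κ A ((v⁻¹ : κˣ) : κ)) z w x.1 x.2.2 *
        (if p = (x.2.2, x.2.1, x.1) then 1 else 0) := by
  obtain ⟨a, b, c⟩ := x
  obtain ⟨d, e, f⟩ := p
  simp only [emb13, of_apply, Rtrig_apply', Prod.mk.injEq]
  split_ifs <;> first | ring1 | (exfalso; omega)

lemma emb23_row (n : ℕ) (z w : A) (x p : Fin n × Fin n × Fin n) :
    emb23 n (Rtrig n v z w) x p =
      Dco (algebraMap κ A (v : κ)) (algebraMap κ A ((v⁻¹ : κˣ) : κ)) z w x.2.1 x.2.2 *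
        (if p = x then 1 else 0) +
      Oco (algebraMap κ A (v : κ)) (algebraMap κ A ((v⁻¹ : κˣ) : κ)) z w x.2.1 x.2.2 *
        (if p = (x.1, x.2.2, x.2.1) then 1 else 0) := by
  obtain ⟨a, b, c⟩ := x
  obtain ⟨d, e, f⟩ := p
  simp only [emb23, of_apply, Rtrig_apply', Prod.mk.injEq]
  split_ifs <;> first | ring1 | (exfalso; omega)

end helpers

/-- If `Amat` has rows supported on (at most) two points, expand `(Amat * B) x y`. -/
lemma mul_rowform {ι : Type*} [Fintype ι] [DecidableEq ι] {R : Type*} [CommRing R]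
    (Amat B : Matrix ι ι R) (d o : ι → R) (t : ι → ι)
    (hA : ∀ x p, Amat x p = d x * (if p = x then 1 else 0) + o x * (if p = t x then 1 else 0))
    (x y : ι) :
    (Amat * B) x y = d x * B x y + o x * B (t x) y := by
  rw [Matrix.mul_apply]
  simp only [hA, add_mul, ite_mul, one_mul, zero_mul, mul_ite, mul_one, mul_zero,
    Finset.sum_add_distrib, Finset.sum_ite_eq, Finset.sum_ite_eq', Finset.mem_univ, if_true]

set_option maxHeartbeats 3200000 in
theorem ybe_key {R : Type*} [CommRing R] (a b u p q : R) (hab : a * b = 1)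
    {n : ℕ} (i j k : Fin n) (y : Fin n × Fin n × Fin n) :
    Dco a b u p i j *
        (Dco a b u q i k *
            (Dco a b p q j k * (if y = (i, j, k) then 1 else 0) +
              Oco a b p q j k * (if y = (i, k, j) then 1 else 0)) +
          Oco a b u q i k *
            (Dco a b p q j i * (if y = (k, j, i) then 1 else 0) +
              Oco a b p q j i * (if y = (k, i, j) then 1 else 0))) +
      Oco a b u p i j *
        (Dco a b u q j k *
            (Dco a b p q i k * (if y = (j, i, k) then 1 else 0) +
              Oco a b p q i k * (if y = (j, k, i) then 1 else 0)) +
          Oco a b u q j k *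
            (Dco a b p q i j * (if y = (k, i, j) then 1 else 0) +
              Oco a b p q i j * (if y = (k, j, i) then 1 else 0))) =
    Dco a b p q j k *
        (Dco a b u q i k *
            (Dco a b u p i j * (if y = (i, j, k) then 1 else 0) +
              Oco a b u p i j * (if y = (j, i, k) then 1 else 0)) +
          Oco a b u q i k *
            (Dco a b u p k j * (if y = (k, j, i) then 1 else 0) +
              Oco a b u p k j * (if y = (j, k, i) then 1 else 0))) +
      Oco a b p q j k *
        (Dco a b u q i j *
            (Dco a b u p i k * (if y = (i, k, j) then 1 else 0) +
              Oco a b u p i k * (if y = (k, i, j) then 1 else 0)) +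
          Oco a b u q i j *
            (Dco a b u p j k * (if y = (j, k, i) then 1 else 0) +
              Oco a b u p j k * (if y = (k, j, i) then 1 else 0))) := by
  rcases lt_trichotomy i j with h1 | h1 | h1 <;>
    rcases lt_trichotomy i k with h2 | h2 | h2 <;>
      rcases lt_trichotomy j k with h3 | h3 | h3
  all_goals try (exfalso; omega)
  all_goals try subst h1
  all_goals try subst h2
  all_goals try subst h3
  all_goals try (have e1 := h1.ne; have e1' := h1.ne'; have l1 := lt_asymm h1)
  all_goals try (have e2 := h2.ne; have e2' := h2.ne'; have l2 := lt_asymm h2)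
  all_goals try (have e3 := h3.ne; have e3' := h3.ne'; have l3 := lt_asymm h3)
  all_goals revert hab
  all_goals simp only [Dco, Oco]
  all_goals simp_all only [lt_irrefl, lt_self_iff_false, ne_eq, not_false_eq_true,
    if_true, if_false, ite_true, ite_false, eq_self_iff_true, not_true]
  all_goals intro hab
  all_goals
    split_ifs <;>
      first
        | ring1
        | linear_combination ((a - b) * u * (p - u) * (q - p)) * hab
        | linear_combination (-((a - b) * u * (p - u) * (q - p))) * hab
        | linear_combination ((a - b) * q * (p - u) * (p - q)) * hab
        | linear_combination (-((a - b) * q * (p - u) * (p - q))) * hab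
        | (exfalso; subst_vars; simp only [Prod.mk.injEq] at *; omega)
        | (exfalso; simp_all; done)

/-- The trigonometric R-matrix satisfies the Yang–Baxter equation with spectral parameters
`R₁₂(u,v')·R₁₃(u,w)·R₂₃(v',w) = R₂₃(v',w)·R₁₃(u,w)·R₁₂(u,v')`, as an identity of `n³×n³`
matrices with entries in the polynomial ring `k[u,v',w]`. -/
theorem trigonometric_yang_baxter (n : ℕ) (hn : 1 ≤ n) (k : Type*) [Field k] (v : kˣ) :
    emb12 n (Rtrig n v (X 0 : MvPolynomial (Fin 3) k) (X 1)) *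
        emb13 n (Rtrig n v (X 0 : MvPolynomial (Fin 3) k) (X 2)) *
          emb23 n (Rtrig n v (X 1 : MvPolynomial (Fin 3) k) (X 2)) =
      emb23 n (Rtrig n v (X 1 : MvPolynomial (Fin 3) k) (X 2)) *
        emb13 n (Rtrig n v (X 0 : MvPolynomial (Fin 3) k) (X 2)) *
          emb12 n (Rtrig n v (X 0 : MvPolynomial (Fin 3) k) (X 1)) := by
  set A := MvPolynomial (Fin 3) k with hA
  set a : A := algebraMap k A ((v : kˣ) : k) with ha
  set b : A := algebraMap k A ((v⁻¹ : kˣ) : k) with hb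
  have hab : a * b = 1 := by
    rw [ha, hb, ← _root_.map_mul, Units.mul_inv, _root_.map_one]
  have h12 : ∀ x p : Fin n × Fin n × Fin n,
      emb12 n (Rtrig n v (X 0 : A) (X 1)) x p =
        (fun x : Fin n × Fin n × Fin n => Dco a b (X 0 : A) (X 1) x.1 x.2.1) x *
          (if p = x then 1 else 0) +
        (fun x : Fin n × Fin n × Fin n => Oco a b (X 0 : A) (X 1) x.1 x.2.1) x *
          (if p = (fun x : Fin n × Fin n × Fin n => (x.2.1, x.1, x.2.2)) x then 1 else 0) :=
    fun x p => emb12_row v n _ _ x p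
  have h13 : ∀ x p : Fin n × Fin n × Fin n,
      emb13 n (Rtrig n v (X 0 : A) (X 2)) x p =
        (fun x : Fin n × Fin n × Fin n => Dco a b (X 0 : A) (X 2) x.1 x.2.2) x *
          (if p = x then 1 else 0) +
        (fun x : Fin n × Fin n × Fin n => Oco a b (X 0 : A) (X 2) x.1 x.2.2) x *
          (if p = (fun x : Fin n × Fin n × Fin n => (x.2.2, x.2.1, x.1)) x then 1 else 0) :=
    fun x p => emb13_row v n _ _ x p
  have h23 : ∀ x p : Fin n × Fin n × Fin n,
      emb23 n (Rtrig n v (X 1 : A) (X 2)) x p =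
        (fun x : Fin n × Fin n × Fin n => Dco a b (X 1 : A) (X 2) x.2.1 x.2.2) x *
          (if p = x then 1 else 0) +
        (fun x : Fin n × Fin n × Fin n => Oco a b (X 1 : A) (X 2) x.2.1 x.2.2) x *
          (if p = (fun x : Fin n × Fin n × Fin n => (x.1, x.2.2, x.2.1)) x then 1 else 0) :=
    fun x p => emb23_row v n _ _ x p
  apply Matrix.ext
  rintro ⟨i, j, l⟩ y
  rw [Matrix.mul_assoc, Matrix.mul_assoc]
  rw [mul_rowform _ _ _ _ _ h12 (i, j, l) y, mul_rowform _ _ _ _ _ h23 (i, j, l) y]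
  rw [mul_rowform _ _ _ _ _ h13, mul_rowform _ _ _ _ _ h13,
      mul_rowform _ _ _ _ _ h13, mul_rowform _ _ _ _ _ h13]
  simp only [h23, h12]
  linear_combination ybe_key a b (X 0 : A) (X 1) (X 2) hab i j l y
end
end

section
/- Let n ≥ 1, k a field, v ∈ kˣ a unit, D an associative unital k-algebra, and T⁺, T⁻ two n×n matrices with entries in D. Then the matrix T(z) := z·T⁺ − T⁻ satisfies the trigonometric RTT relation R_trig(z,w)·T₁(z)·T₂(w) = T₂(w)·T₁(z)·R_trig(z,w) (an identity of n²×n² matrices with entries in the polynomial ring D[z,w]) if and only if the following three finite RTT relations hold: R·T⁺₁·T⁺₂ = T⁺₂·T⁺₁·R, R·T⁻₁·T⁻₂ = T⁻₂·T⁻₁·R, and R·T⁻₁·T⁺₂ = T⁺₂·T⁻₁·R, where for an n×n matrix X we set X₁ := X⊗Id_n and X₂ := Id_n⊗X. -/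
open Matrix Polynomial

noncomputable section

/-- The finite trigonometric R-matrix
`R = v⁻¹·∑ᵢ Eᵢᵢ⊗Eᵢᵢ + ∑_{i≠j} Eᵢᵢ⊗Eⱼⱼ + (v⁻¹−v)·∑_{i>j} Eᵢⱼ⊗Eⱼᵢ`
with entries in a `k`-algebra `A`. -/
def Rfin (n : ℕ) {k : Type*} [Field k] {A : Type*} [Ring A] [Algebra k A] (v : kˣ) :
    Matrix (Fin n × Fin n) (Fin n × Fin n) A :=
  Matrix.of fun x y =>
    (if x = y then (if x.1 = x.2 then algebraMap k A ((v⁻¹ : kˣ) : k) else 1) else 0) +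
    (if x.1 = y.2 ∧ x.2 = y.1 ∧ x.2 < x.1 then
      algebraMap k A ((v⁻¹ : kˣ) : k) - algebraMap k A (v : k)
     else 0)

/-- `X₁ = X ⊗ Id_n`. -/
def kron1 {n : ℕ} {R : Type*} [Ring R] (X : Matrix (Fin n) (Fin n) R) :
    Matrix (Fin n × Fin n) (Fin n × Fin n) R :=
  Matrix.of fun x y => X x.1 y.1 * (if x.2 = y.2 then 1 else 0)

/-- `X₂ = Id_n ⊗ X`. -/
def kron2 {n : ℕ} {R : Type*} [Ring R] (X : Matrix (Fin n) (Fin n) R) :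
    Matrix (Fin n × Fin n) (Fin n × Fin n) R :=
  Matrix.of fun x y => (if x.1 = y.1 then 1 else 0) * X x.2 y.2

/-- The linear Lax matrix `T(ζ) = ζ·T⁺ − T⁻` with entries in `D[z,w] = (D[z])[w]`. -/
def TofZ {n : ℕ} {D : Type*} [Ring D] (Tp Tm : Matrix (Fin n) (Fin n) D)
    (ζ : Polynomial (Polynomial D)) : Matrix (Fin n) (Fin n) (Polynomial (Polynomial D)) :=
  Matrix.of fun i j =>
    ζ * Polynomial.C (Polynomial.C (Tp i j)) - Polynomial.C (Polynomial.C (Tm i j))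


namespace RTTAux

open Polynomial Matrix

/-! ### monomials `z^i w^j s` in `S[z][w]` -/

variable {S : Type*} [Ring S]

/-- monomial `z^i w^j · s` in `S[z][w]`. -/
def mm (i j : ℕ) (s : S) : Polynomial (Polynomial S) :=
  Polynomial.C (Polynomial.X ^ i * Polynomial.C s) * Polynomial.X ^ j

lemma mm_mul (i j a b : ℕ) (s t : S) : mm i j s * mm a b t = mm (i + a) (j + b) (s * t) := by
  unfold mm
  rw [mul_assoc, ← mul_assoc (X ^ j : Polynomial (Polynomial S)),
    X_pow_mul (p := C (X ^ a * C t)), mul_assoc (C (X ^ a * C t)), ← pow_add, ← mul_assoc,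
    ← _root_.map_mul]
  congr 2
  rw [mul_assoc, ← mul_assoc (C s), ← X_pow_mul (p := C s), mul_assoc (X ^ a : Polynomial S),
    ← mul_assoc, ← pow_add, ← _root_.map_mul]

lemma mm_sub (i j : ℕ) (s t : S) : mm i j (s - t) = mm i j s - mm i j t := by
  unfold mm
  rw [_root_.map_sub, mul_sub, _root_.map_sub, sub_mul]

lemma mm_coeff (a b i j : ℕ) (s : S) :
    ((mm a b s).coeff j).coeff i = if a = i ∧ b = j then s else 0 := by
  unfold mm
  rw [coeff_C_mul, coeff_X_pow, X_pow_mul]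
  by_cases hb : j = b <;> by_cases ha : i = a
  · simp [hb, ha, coeff_C_mul, coeff_X_pow]
  · simp [hb, coeff_C_mul, coeff_X_pow, ha, show ¬ a = i from fun h => ha h.symm]
  · simp [show ¬ b = j from fun h => hb h.symm, hb]
  · simp [show ¬ b = j from fun h => hb h.symm, hb]

/-- `mm i j` as an additive monoid hom. -/
def mmHom (i j : ℕ) : S →+ Polynomial (Polynomial S) where
  toFun := mm i j
  map_zero' := by simp [mm]
  map_add' a b := by
    show mm i j (a + b) = mm i j a + mm i j b
    unfold mm
    rw [_root_.map_add, mul_add, _root_.map_add, add_mul]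

lemma mmHom_coe (i j : ℕ) : ⇑(mmHom (S := S) i j) = mm i j := rfl

/-- conjugation transfer: from `R U V = W Z R` get the `A`-relation. -/
lemma conj_rel (R Ri Pm A U V W Z : S) (h1 : R * Ri = 1) (h2 : Ri * R = 1) (hP : Pm * Pm = 1)
    (hA : A = Pm * Ri * Pm) (hrel : R * U * V = W * Z * R) :
    A * (Pm * W * Pm) * (Pm * Z * Pm) = (Pm * U * Pm) * (Pm * V * Pm) * A := by
  have hPP : ∀ x : S, Pm * (Pm * x) = x := fun x => by rw [← mul_assoc, hP, one_mul]
  have h3 : ∀ x : S, U * (V * (Ri * x)) = Ri * (W * (Z * x)) := by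
    intro x
    have h4 : U * V * Ri = Ri * (W * Z) := by
      have h5 : Ri * (R * U * V) * Ri = Ri * (W * Z * R) * Ri := by rw [hrel]
      calc U * V * Ri = Ri * R * (U * V * Ri) := by rw [h2, one_mul]
        _ = Ri * (R * U * V) * Ri := by noncomm_ring
        _ = Ri * (W * Z * R) * Ri := h5
        _ = Ri * (W * Z) * (R * Ri) := by noncomm_ring
        _ = Ri * (W * Z) := by rw [h1, mul_one]
    calc U * (V * (Ri * x)) = U * V * Ri * x := by noncomm_ring
      _ = Ri * (W * Z) * x := by rw [h4]
      _ = Ri * (W * (Z * x)) := by noncomm_ring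
  rw [hA]
  simp only [mul_assoc, hPP]
  rw [h3]

/-! ### matrix-valued monomials -/

variable {n : ℕ} {D : Type*} [Ring D]

/-- matrix monomial `z^i w^j · s` in `Matrix N N (D[z][w])`. -/
def MM (i j : ℕ) (s : Matrix (Fin n × Fin n) (Fin n × Fin n) D) :
    Matrix (Fin n × Fin n) (Fin n × Fin n) (Polynomial (Polynomial D)) :=
  Matrix.of fun x y => mm i j (s x y)

lemma MM_sub (i j : ℕ) (s t : Matrix (Fin n × Fin n) (Fin n × Fin n) D) :
    MM i j (s - t) = MM i j s - MM i j t := by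
  ext x y
  simp [MM, mm_sub]

lemma MM_mul (i j a b : ℕ) (s t : Matrix (Fin n × Fin n) (Fin n × Fin n) D) :
    MM i j s * MM a b t = MM (i + a) (j + b) (s * t) := by
  refine Matrix.ext fun x y => ?_
  simp only [Matrix.mul_apply, MM, Matrix.of_apply, mm_mul]
  rw [← mmHom_coe]
  exact (map_sum _ _ _).symm

/-! ### the core equivalence -/

set_option maxHeartbeats 1600000 in
theorem coreMM (R Ri Pm A cS Tp1 Tp2 Tm1 Tm2 : Matrix (Fin n × Fin n) (Fin n × Fin n) D)
    (h1 : R * Ri = 1) (h2 : Ri * R = 1) (hP : Pm * Pm = 1)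
    (hA : A = Pm * Ri * Pm) (hc : Ri * Pm = Pm * R - cS)
    (hcC : ∀ s : Matrix (Fin n × Fin n) (Fin n × Fin n) D, cS * s = s * cS)
    (hp : Pm * Tp1 * Pm = Tp2) (hm : Pm * Tm1 * Pm = Tm2) :
    ((MM 1 0 A - MM 0 1 R) * (MM 1 0 Tp1 - MM 0 0 Tm1) * (MM 0 1 Tp2 - MM 0 0 Tm2) =
      (MM 0 1 Tp2 - MM 0 0 Tm2) * (MM 1 0 Tp1 - MM 0 0 Tm1) * (MM 1 0 A - MM 0 1 R)) ↔
    (R * Tp1 * Tp2 = Tp2 * Tp1 * R ∧ R * Tm1 * Tm2 = Tm2 * Tm1 * R ∧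
      R * Tm1 * Tp2 = Tp2 * Tm1 * R) := by
  have expandL : (MM 1 0 A - MM 0 1 R) * (MM 1 0 Tp1 - MM 0 0 Tm1) *
      (MM 0 1 Tp2 - MM 0 0 Tm2) =
      MM 2 1 (A * Tp1 * Tp2) - MM 2 0 (A * Tp1 * Tm2) - MM 1 1 (A * Tm1 * Tp2)
        + MM 1 0 (A * Tm1 * Tm2) - MM 1 2 (R * Tp1 * Tp2) + MM 1 1 (R * Tp1 * Tm2)
        + MM 0 2 (R * Tm1 * Tp2) - MM 0 1 (R * Tm1 * Tm2) := by
    simp only [sub_mul, mul_sub, MM_mul]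
    norm_num
    abel
  have expandR : (MM 0 1 Tp2 - MM 0 0 Tm2) * (MM 1 0 Tp1 - MM 0 0 Tm1) *
      (MM 1 0 A - MM 0 1 R) =
      MM 2 1 (Tp2 * Tp1 * A) - MM 1 2 (Tp2 * Tp1 * R) - MM 1 1 (Tp2 * Tm1 * A)
        + MM 0 2 (Tp2 * Tm1 * R) - MM 2 0 (Tm2 * Tp1 * A) + MM 1 1 (Tm2 * Tp1 * R)
        + MM 1 0 (Tm2 * Tm1 * A) - MM 0 1 (Tm2 * Tm1 * R) := by
    simp only [sub_mul, mul_sub, MM_mul]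
    norm_num
    abel
  rw [expandL, expandR]
  constructor
  · intro h
    refine ⟨?_, ?_, ?_⟩
    · ext x y
      have e := congrArg (fun Mt : Matrix (Fin n × Fin n) (Fin n × Fin n)
          (Polynomial (Polynomial D)) => ((Mt x y).coeff 2).coeff 1) h
      simpa [Matrix.sub_apply, Matrix.add_apply, MM, coeff_sub, coeff_add, mm_coeff] using e
    · ext x y
      have e := congrArg (fun Mt : Matrix (Fin n × Fin n) (Fin n × Fin n)
          (Polynomial (Polynomial D)) => ((Mt x y).coeff 1).coeff 0) h
      simpa [Matrix.sub_apply, Matrix.add_apply, MM, coeff_sub, coeff_add, mm_coeff] using e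
    · ext x y
      have e := congrArg (fun Mt : Matrix (Fin n × Fin n) (Fin n × Fin n)
          (Polynomial (Polynomial D)) => ((Mt x y).coeff 2).coeff 0) h
      simpa [Matrix.sub_apply, Matrix.add_apply, MM, coeff_sub, coeff_add, mm_coeff] using e
  · rintro ⟨r1, r2, r3⟩
    have hPP : ∀ x : Matrix (Fin n × Fin n) (Fin n × Fin n) D, Pm * (Pm * x) = x :=
      fun x => by rw [← mul_assoc, hP, one_mul]
    have hsw : ∀ x : Matrix (Fin n × Fin n) (Fin n × Fin n) D, x * cS = cS * x :=
      fun x => (hcC x).symm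
    have push : ∀ x y : Matrix (Fin n × Fin n) (Fin n × Fin n) D,
        x * (cS * y) = cS * (x * y) := fun x y => by
      rw [← mul_assoc, hsw x, mul_assoc]
    have hp2 : Pm * Tp2 * Pm = Tp1 := by
      rw [← hp]; simp only [mul_assoc, hPP, hP, mul_one]
    have hm2 : Pm * Tm2 * Pm = Tm1 := by
      rw [← hm]; simp only [mul_assoc, hPP, hP, mul_one]
    have I1 : A * Tp1 * Tp2 = Tp2 * Tp1 * A := by
      have e := conj_rel R Ri Pm A Tp1 Tp2 Tp2 Tp1 h1 h2 hP hA r1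
      rwa [hp2, hp] at e
    have I4 : A * Tm1 * Tm2 = Tm2 * Tm1 * A := by
      have e := conj_rel R Ri Pm A Tm1 Tm2 Tm2 Tm1 h1 h2 hP hA r2
      rwa [hm2, hm] at e
    have I2 : A * Tp1 * Tm2 = Tm2 * Tp1 * A := by
      have e := conj_rel R Ri Pm A Tm1 Tp2 Tp2 Tm1 h1 h2 hP hA r3
      rwa [hp2, hm] at e
    have hQQi : (Pm * R) * (Ri * Pm) = 1 := by
      calc (Pm * R) * (Ri * Pm) = Pm * (R * Ri) * Pm := by noncomm_ring
        _ = 1 := by rw [h1, mul_one, hP]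
    have h2Q : (Pm * R) * (Pm * R) = cS * (Pm * R) + 1 := by
      have e0 : (Pm * R) * (Pm * R - cS) = 1 := by rw [← hc]; exact hQQi
      have e : (Pm * R) * (Pm * R) - (Pm * R) * cS = 1 := by rw [← e0]; noncomm_ring
      calc (Pm * R) * (Pm * R)
          = ((Pm * R) * (Pm * R) - (Pm * R) * cS) + (Pm * R) * cS := by noncomm_ring
        _ = 1 + (Pm * R) * cS := by rw [e]
        _ = cS * (Pm * R) + 1 := by rw [hsw (Pm * R), add_comm]
    have hrel' : (Pm * R) * (Tm1 * Tp2) = (Tp1 * Tm2) * (Pm * R) := by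
      calc (Pm * R) * (Tm1 * Tp2) = Pm * (R * Tm1 * Tp2) := by noncomm_ring
        _ = Pm * (Tp2 * Tm1 * R) := by rw [r3]
        _ = (Pm * Tp2 * Pm) * (Pm * Tm1 * Pm) * (Pm * R) := by simp only [mul_assoc, hPP]
        _ = (Tp1 * Tm2) * (Pm * R) := by rw [hp2, hm]
    have hM' : Tp1 * Tm2 = (Pm * R) * (Tm1 * Tp2) * (Ri * Pm) := by
      have e := congrArg (· * (Ri * Pm)) hrel'
      rw [mul_assoc (Tp1 * Tm2), hQQi, mul_one] at e
      exact e.symm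
    have KEY : (Pm * R) * (Tp1 * Tm2) - (Ri * Pm) * (Tm1 * Tp2)
        = (Tm1 * Tp2) * (Pm * R) - (Tp1 * Tm2) * (Ri * Pm) := by
      rw [hM', hc]
      set q : Matrix (Fin n × Fin n) (Fin n × Fin n) D := Pm * R with hq
      have N4 : q * (q * (Tm1 * Tp2) * (q - cS)) - (q - cS) * (Tm1 * Tp2)
          = cS * (q * ((Tm1 * Tp2) * q)) + (Tm1 * Tp2) * q - q * (Tm1 * Tp2)
            - cS * (cS * (q * (Tm1 * Tp2))) := by
        calc q * (q * (Tm1 * Tp2) * (q - cS)) - (q - cS) * (Tm1 * Tp2)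
            = (q * q) * ((Tm1 * Tp2) * q) - (q * q) * ((Tm1 * Tp2) * cS)
              - q * (Tm1 * Tp2) + cS * (Tm1 * Tp2) := by noncomm_ring
          _ = (cS * q + 1) * ((Tm1 * Tp2) * q) - (cS * q + 1) * ((Tm1 * Tp2) * cS)
              - q * (Tm1 * Tp2) + cS * (Tm1 * Tp2) := by rw [h2Q]
          _ = _ := by
              simp only [add_mul, mul_add, sub_mul, mul_sub, one_mul, mul_one, mul_assoc,
                push, hsw]
              abel
      have N5 : (Tm1 * Tp2) * q - q * (Tm1 * Tp2) * (q - cS) * (q - cS)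
          = cS * (q * ((Tm1 * Tp2) * q)) + (Tm1 * Tp2) * q - q * (Tm1 * Tp2)
            - cS * (cS * (q * (Tm1 * Tp2))) := by
        calc (Tm1 * Tp2) * q - q * (Tm1 * Tp2) * (q - cS) * (q - cS)
            = (Tm1 * Tp2) * q - (q * (Tm1 * Tp2)) * (q * q) + (q * (Tm1 * Tp2)) * (cS * q)
              + (q * (Tm1 * Tp2)) * (q * cS) - (q * (Tm1 * Tp2)) * (cS * cS) := by noncomm_ring
          _ = (Tm1 * Tp2) * q - (q * (Tm1 * Tp2)) * (cS * q + 1) + (q * (Tm1 * Tp2)) * (cS * q)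
              + (q * (Tm1 * Tp2)) * (q * cS) - (q * (Tm1 * Tp2)) * (cS * cS) := by rw [h2Q]
          _ = _ := by
              simp only [add_mul, mul_add, sub_mul, mul_sub, one_mul, mul_one, mul_assoc,
                push, hsw]
              abel
      rw [N4, N5]
    have f0 : Pm * ((Pm * R) * (Tp1 * Tm2)) = R * Tp1 * Tm2 := by
      simp only [mul_assoc, hPP]
    have f3 : Pm * ((Ri * Pm) * (Tm1 * Tp2)) = A * Tm1 * Tp2 := by
      rw [hA]; simp only [mul_assoc, hPP]
    have f1 : Pm * ((Tm1 * Tp2) * (Pm * R)) = Tm2 * Tp1 * R := by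
      rw [← hm, ← hp2]; simp only [mul_assoc, hPP]
    have f2 : Pm * ((Tp1 * Tm2) * (Ri * Pm)) = Tp2 * Tm1 * A := by
      rw [hA, ← hp, ← hm2]; simp only [mul_assoc, hPP]
    have I3 : R * Tp1 * Tm2 - A * Tm1 * Tp2 = Tm2 * Tp1 * R - Tp2 * Tm1 * A := by
      rw [← f0, ← f3, ← f1, ← f2, ← mul_sub, ← mul_sub, KEY]
    rw [I1, I2, I4, r1, r2, r3]
    have keymm : MM 1 1 (R * Tp1 * Tm2) - MM 1 1 (A * Tm1 * Tp2)
        = MM 1 1 (Tm2 * Tp1 * R) - MM 1 1 (Tp2 * Tm1 * A) := by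
      rw [← MM_sub, ← MM_sub, I3]
    have key2 : MM 1 1 (R * Tp1 * Tm2)
        = (MM 1 1 (Tm2 * Tp1 * R) - MM 1 1 (Tp2 * Tm1 * A)) + MM 1 1 (A * Tm1 * Tp2) :=
      eq_add_of_sub_eq keymm
    rw [key2]
    abel


/-! ### matrix identities over `D` -/

variable {k : Type*} [Field k] [Algebra k D]


variable {n : ℕ} {k : Type*} [Field k] {D : Type*} [Ring D] [Algebra k D]

/-- permutation matrix `P` -/
def Pmat (n : ℕ) (D : Type*) [Ring D] : Matrix (Fin n × Fin n) (Fin n × Fin n) D :=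
  Matrix.of fun x y => if x.1 = y.2 ∧ x.2 = y.1 then 1 else 0

/-- inverse of the finite R-matrix -/
def Rinv (n : ℕ) (D : Type*) [Ring D] [Algebra k D] (v : kˣ) :
    Matrix (Fin n × Fin n) (Fin n × Fin n) D :=
  Matrix.of fun x y =>
    (if x = y then (if x.1 = x.2 then algebraMap k D (v : k) else 1) else 0) +
    (if x.1 = y.2 ∧ x.2 = y.1 ∧ x.2 < x.1 then
      algebraMap k D (v : k) - algebraMap k D ((v⁻¹ : kˣ) : k)
     else 0)

/-- the `z`-coefficient matrix of `Rtrig` -/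
def Amat (n : ℕ) (D : Type*) [Ring D] [Algebra k D] (v : kˣ) :
    Matrix (Fin n × Fin n) (Fin n × Fin n) D :=
  Matrix.of fun x y =>
    (if x = y then (if x.1 = x.2 then algebraMap k D (v : k) else 1) else 0) +
    (if x.1 = y.2 ∧ x.2 = y.1 ∧ x.1 < x.2 then
      algebraMap k D (v : k) - algebraMap k D ((v⁻¹ : kˣ) : k)
     else 0)

lemma Pmul (M : Matrix (Fin n × Fin n) (Fin n × Fin n) D) :
    Pmat n D * M = Matrix.of fun x y => M (x.2, x.1) y := by
  ext x y
  rw [Matrix.mul_apply]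
  have h : ∀ a : Fin n × Fin n,
      Pmat n D x a * M a y = if (x.2, x.1) = a then M a y else 0 := by
    intro a
    by_cases h : (x.2, x.1) = a
    · rw [← h]; simp [Pmat]
    · have h2 : ¬(x.1 = a.2 ∧ x.2 = a.1) := fun ⟨h1', h2'⟩ => h (Prod.ext h2' h1')
      simp [Pmat, h, h2]
  rw [Finset.sum_congr rfl fun a _ => h a, Finset.sum_ite_eq]
  simp

lemma mulP (M : Matrix (Fin n × Fin n) (Fin n × Fin n) D) :
    M * Pmat n D = Matrix.of fun x y => M x (y.2, y.1) := by
  ext x y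
  rw [Matrix.mul_apply]
  have h : ∀ a : Fin n × Fin n,
      M x a * Pmat n D a y = if (y.2, y.1) = a then M x a else 0 := by
    intro a
    by_cases h : (y.2, y.1) = a
    · rw [← h]; simp [Pmat]
    · have h2 : ¬(a.1 = y.2 ∧ a.2 = y.1) := fun ⟨h1', h2'⟩ => h (Prod.ext h1'.symm h2'.symm)
      simp [Pmat, h, h2]
  rw [Finset.sum_congr rfl fun a _ => h a, Finset.sum_ite_eq]
  simp

lemma PP : Pmat n D * Pmat n D = 1 := by
  rw [Pmul]
  ext x y
  simp [Pmat, Matrix.one_apply, Prod.ext_iff, and_comm]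

lemma Pkron (X : Matrix (Fin n) (Fin n) D) :
    Pmat n D * kron1 X * Pmat n D = kron2 X := by
  rw [Pmul, mulP]
  ext x y
  simp only [Matrix.of_apply, kron1, kron2]
  by_cases h : x.1 = y.1 <;> simp [h, mul_ite, ite_mul]

lemma diagmul (d : Fin n × Fin n → D) (M : Matrix (Fin n × Fin n) (Fin n × Fin n) D) :
    (Matrix.of fun x y => if x = y then d x else 0) * M
      = Matrix.of fun x y => d x * M x y := by
  ext x y
  rw [Matrix.mul_apply]
  simp [ite_mul, Finset.sum_ite_eq]

lemma swapmul (P : Fin n × Fin n → Prop) [DecidablePred P] (e : D)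
    (M : Matrix (Fin n × Fin n) (Fin n × Fin n) D) :
    (Matrix.of fun x y => if x.1 = y.2 ∧ x.2 = y.1 ∧ P x then e else 0) * M
      = Matrix.of fun x y => if P x then e * M (x.2, x.1) y else 0 := by
  ext x y
  rw [Matrix.mul_apply]
  simp only [Matrix.of_apply]
  have h : ∀ a : Fin n × Fin n,
      (if x.1 = a.2 ∧ x.2 = a.1 ∧ P x then e else 0) * M a y
        = if (x.2, x.1) = a then (if P x then e * M a y else 0) else 0 := by
    intro a
    by_cases h : (x.2, x.1) = a
    · rw [← h]; by_cases hp : P x <;> simp [hp]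
    · have h2 : ¬(x.1 = a.2 ∧ x.2 = a.1 ∧ P x) := fun ⟨h1', h2', _⟩ =>
        h (Prod.ext h2' h1')
      simp [h, h2]
  rw [Finset.sum_congr rfl fun a _ => h a, Finset.sum_ite_eq]
  simp



variable (v : kˣ)

lemma Rfin_decomp :
    Rfin n (A := D) v
      = (Matrix.of fun x y =>
          if x = y then (if x.1 = x.2 then algebraMap k D ((v⁻¹ : kˣ) : k) else 1) else 0)
        + (Matrix.of fun x (y : Fin n × Fin n) =>
            if x.1 = y.2 ∧ x.2 = y.1 ∧ x.2 < x.1 then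
              algebraMap k D ((v⁻¹ : kˣ) : k) - algebraMap k D (v : k) else 0) := by
  ext x y
  simp [Rfin, Matrix.add_apply]

lemma Rinv_decomp :
    Rinv n D v
      = (Matrix.of fun x y =>
          if x = y then (if x.1 = x.2 then algebraMap k D (v : k) else 1) else 0)
        + (Matrix.of fun x (y : Fin n × Fin n) =>
            if x.1 = y.2 ∧ x.2 = y.1 ∧ x.2 < x.1 then
              algebraMap k D (v : k) - algebraMap k D ((v⁻¹ : kˣ) : k) else 0) := by
  ext x y
  simp [Rinv, Matrix.add_apply]

lemma RRi : Rfin n (A := D) v * Rinv n D v = 1 := by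
  have hba : algebraMap k D ((v : k))⁻¹ * algebraMap k D (v : k) = 1 := by
    rw [← _root_.map_mul, inv_mul_cancel₀ v.ne_zero, _root_.map_one]
  have hab : algebraMap k D (v : k) * algebraMap k D ((v : k))⁻¹ = 1 := by
    rw [← _root_.map_mul, mul_inv_cancel₀ v.ne_zero, _root_.map_one]
  rw [Rfin_decomp, add_mul, diagmul, swapmul]
  ext x y
  obtain ⟨x1, x2⟩ := x
  obtain ⟨y1, y2⟩ := y
  simp only [Matrix.add_apply, Matrix.of_apply, Rinv, Matrix.one_apply, Prod.mk.injEq,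
    Units.val_inv_eq_inv_val]
  rcases lt_trichotomy x1 x2 with hlt | heq | hgt
  · simp [hlt.ne, lt_asymm hlt, mul_add, mul_ite, hba, hab]
  · subst heq
    simp [lt_irrefl, mul_add, mul_ite, hba, hab]
  · by_cases e1 : x1 = y1 <;> by_cases e2 : x2 = y2 <;> by_cases e3 : x1 = y2 <;>
      by_cases e4 : x2 = y1 <;>
      simp_all [lt_asymm hgt, lt_irrefl, mul_add, mul_ite, hba, hab] <;>
      first
        | exact fun h' => absurd (h'.trans hgt) (lt_irrefl _)
        | exact fun h' => absurd (hgt.trans h') (lt_irrefl _)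
        | noncomm_ring
lemma RiR : Rinv n D v * Rfin n (A := D) v = 1 := by
  have hba : algebraMap k D ((v : k))⁻¹ * algebraMap k D (v : k) = 1 := by
    rw [← _root_.map_mul, inv_mul_cancel₀ v.ne_zero, _root_.map_one]
  have hab : algebraMap k D (v : k) * algebraMap k D ((v : k))⁻¹ = 1 := by
    rw [← _root_.map_mul, mul_inv_cancel₀ v.ne_zero, _root_.map_one]
  rw [Rinv_decomp, add_mul, diagmul, swapmul]
  ext x y
  obtain ⟨x1, x2⟩ := x
  obtain ⟨y1, y2⟩ := y
  simp only [Matrix.add_apply, Matrix.of_apply, Rfin, Matrix.one_apply, Prod.mk.injEq,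
    Units.val_inv_eq_inv_val]
  rcases lt_trichotomy x1 x2 with hlt | heq | hgt
  · simp [hlt.ne, lt_asymm hlt, mul_add, mul_ite, hba, hab]
  · subst heq
    simp [lt_irrefl, mul_add, mul_ite, hba, hab]
  · by_cases e1 : x1 = y1 <;> by_cases e2 : x2 = y2 <;> by_cases e3 : x1 = y2 <;>
      by_cases e4 : x2 = y1 <;>
      simp_all [lt_asymm hgt, lt_irrefl, mul_add, mul_ite, hba, hab] <;>
      first
        | exact fun h' => absurd (h'.trans hgt) (lt_irrefl _)
        | exact fun h' => absurd (hgt.trans h') (lt_irrefl _)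
        | noncomm_ring

lemma AeqPRiP : Amat n D v = Pmat n D * Rinv n D v * Pmat n D := by
  rw [Pmul, mulP]
  ext x y
  obtain ⟨x1, x2⟩ := x
  obtain ⟨y1, y2⟩ := y
  simp only [Amat, Rinv, Matrix.of_apply, Prod.mk.injEq]
  by_cases d : x1 = x2
  · subst d
    by_cases e1 : x1 = y1 <;> by_cases e2 : x1 = y2 <;> simp_all [lt_irrefl] <;>
      split_ifs <;> simp_all <;> omega
  · by_cases e1 : x1 = y1 <;> by_cases e2 : x2 = y2 <;> by_cases e3 : x1 = y2 <;>
      by_cases e4 : x2 = y1 <;> simp_all [d, Ne.symm d] <;> split_ifs <;> simp_all <;> omega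

lemma hecke : Rinv n D v * Pmat n D = Pmat n D * Rfin n (A := D) v
    - (algebraMap k D ((v⁻¹ : kˣ) : k) - algebraMap k D (v : k)) • 1 := by
  rw [mulP, Pmul]
  ext x y
  obtain ⟨x1, x2⟩ := x
  obtain ⟨y1, y2⟩ := y
  simp only [Matrix.sub_apply, Matrix.smul_apply, Matrix.one_apply, Matrix.of_apply, Rinv, Rfin,
    Prod.mk.injEq, smul_eq_mul, Units.val_inv_eq_inv_val]
  rcases lt_trichotomy x1 x2 with hlt | heq | hgt
  · by_cases e1 : x1 = y1 <;> by_cases e2 : x2 = y2 <;> by_cases e3 : x1 = y2 <;>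
      by_cases e4 : x2 = y1 <;>
      simp_all [hlt.ne, lt_asymm hlt, lt_irrefl] <;>
      first
        | exact fun h' => absurd (h'.trans hlt) (lt_irrefl _)
        | exact fun h' => absurd (hlt.trans h') (lt_irrefl _)
        | (rw [if_neg (asymm hlt)]; noncomm_ring)
        | (rw [if_pos hlt]; noncomm_ring)
        | noncomm_ring
  · subst heq
    by_cases e1 : x1 = y1 <;> by_cases e2 : x1 = y2 <;> simp_all [lt_irrefl] <;> noncomm_ring
  · by_cases e1 : x1 = y1 <;> by_cases e2 : x2 = y2 <;> by_cases e3 : x1 = y2 <;>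
      by_cases e4 : x2 = y1 <;>
      simp_all [hgt.ne, lt_asymm hgt, lt_irrefl] <;>
      first
        | exact fun h' => absurd (h'.trans hgt) (lt_irrefl _)
        | exact fun h' => absurd (hgt.trans h') (lt_irrefl _)
        | (rw [if_neg (asymm hgt)]; noncomm_ring)
        | (rw [if_pos hgt]; noncomm_ring)
        | noncomm_ring

lemma central (c : k) (M : Matrix (Fin n × Fin n) (Fin n × Fin n) D) :
    (algebraMap k D c • (1 : Matrix (Fin n × Fin n) (Fin n × Fin n) D)) * M
      = M * (algebraMap k D c • (1 : Matrix (Fin n × Fin n) (Fin n × Fin n) D)) := by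
  ext x y
  simp [Matrix.mul_apply, Matrix.smul_apply, Matrix.one_apply, mul_ite, ite_mul,
    Finset.sum_ite_eq, Finset.sum_ite_eq']
  try exact Algebra.commutes c (M x y)


/-! ### decomposition of the factors -/

variable (v : kˣ)

lemma CX_comm (d : D) : (Polynomial.C (Polynomial.X : Polynomial D)) * Polynomial.C (Polynomial.C d)
    = Polynomial.C (Polynomial.C d) * Polynomial.C (Polynomial.X : Polynomial D) := by
  rw [← _root_.map_mul, ← _root_.map_mul, X_mul]

lemma kron1_decomp (Tp Tm : Matrix (Fin n) (Fin n) D) :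
    kron1 (TofZ Tp Tm (Polynomial.C Polynomial.X))
      = MM 1 0 (kron1 Tp) - MM 0 0 (kron1 Tm) := by
  refine Matrix.ext fun x y => ?_
  simp only [kron1, TofZ, MM, mm, Matrix.sub_apply, Matrix.of_apply, pow_one, pow_zero,
    one_mul, mul_one]
  by_cases h : x.2 = y.2 <;> simp [h, _root_.map_mul, sub_mul, CX_comm]

lemma kron2_decomp (Tp Tm : Matrix (Fin n) (Fin n) D) :
    kron2 (TofZ Tp Tm Polynomial.X)
      = MM 0 1 (kron2 Tp) - MM 0 0 (kron2 Tm) := by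
  refine Matrix.ext fun x y => ?_
  simp only [kron2, TofZ, MM, mm, Matrix.sub_apply, Matrix.of_apply, pow_one, pow_zero,
    one_mul, mul_one]
  by_cases h : x.1 = y.1 <;> simp [h, _root_.map_mul, mul_sub, X_mul]

lemma Rtrig_decomp :
    Rtrig n v (Polynomial.C (Polynomial.X : Polynomial D))
        (Polynomial.X : Polynomial (Polynomial D))
      = MM 1 0 (Amat n D v) - MM 0 1 (Rfin n (A := D) v) := by
  have hCX : ∀ d : D, (Polynomial.C (Polynomial.X : Polynomial D)) * Polynomial.C (Polynomial.C d)
      = Polynomial.C (Polynomial.C d) * Polynomial.C (Polynomial.X : Polynomial D) := CX_comm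
  refine Matrix.ext fun x y => ?_
  obtain ⟨x1, x2⟩ := x
  obtain ⟨y1, y2⟩ := y
  simp only [Rtrig, Amat, Rfin, MM, mm, Matrix.sub_apply, Matrix.of_apply, pow_one, pow_zero,
    one_mul, mul_one, Polynomial.algebraMap_apply, Algebra.algebraMap_self, RingHom.id_apply,
    Prod.mk.injEq, ne_eq, Units.val_inv_eq_inv_val]
  rcases lt_trichotomy x1 x2 with hlt | heq | hgt
  · by_cases e1 : x1 = y1 <;> by_cases e2 : x2 = y2 <;> by_cases e3 : x1 = y2 <;>
      by_cases e4 : x2 = y1 <;>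
      simp_all [hlt.ne, lt_asymm hlt, lt_irrefl, _root_.map_mul, _root_.map_sub, sub_mul,
        mul_sub, X_mul, hCX] <;>
      first
        | (simp [if_neg (asymm hlt)] <;> noncomm_ring)
        | (simp [if_pos hlt] <;> noncomm_ring)
        | noncomm_ring
  · subst heq
    by_cases e1 : x1 = y1 <;> by_cases e2 : x1 = y2 <;>
      simp_all [lt_irrefl, _root_.map_mul, _root_.map_sub, sub_mul, mul_sub, X_mul, hCX] <;>
      noncomm_ring
  · by_cases e1 : x1 = y1 <;> by_cases e2 : x2 = y2 <;> by_cases e3 : x1 = y2 <;>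
      by_cases e4 : x2 = y1 <;>
      simp_all [hgt.ne, hgt.ne', lt_asymm hgt, lt_irrefl, _root_.map_mul, _root_.map_sub,
        sub_mul, mul_sub, X_mul, hCX] <;>
      first
        | (simp [if_neg (asymm hgt)] <;> noncomm_ring)
        | (simp [if_pos hgt] <;> noncomm_ring)
        | noncomm_ring

end RTTAux

/-- `T(z) = z·T⁺ − T⁻` satisfies the trigonometric RTT relation
`R_trig(z,w)·T₁(z)·T₂(w) = T₂(w)·T₁(z)·R_trig(z,w)` over `D[z,w]`
if and only if the three finite trigonometric RTT relations
`R·T⁺₁·T⁺₂ = T⁺₂·T⁺₁·R`, `R·T⁻₁·T⁻₂ = T⁻₂·T⁻₁·R`, `R·T⁻₁·T⁺₂ = T⁺₂·T⁻₁·R` hold. -/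
theorem linear_trig_lax_rtt_iff (n : ℕ) (hn : 1 ≤ n)
    (k : Type*) [Field k] (v : kˣ)
    (D : Type*) [Ring D] [Algebra k D]
    (Tp Tm : Matrix (Fin n) (Fin n) D) :
    (Rtrig n v (Polynomial.C (Polynomial.X : Polynomial D))
          (Polynomial.X : Polynomial (Polynomial D)) *
        kron1 (TofZ Tp Tm (Polynomial.C Polynomial.X)) * kron2 (TofZ Tp Tm Polynomial.X) =
      kron2 (TofZ Tp Tm Polynomial.X) * kron1 (TofZ Tp Tm (Polynomial.C Polynomial.X)) *
        Rtrig n v (Polynomial.C (Polynomial.X : Polynomial D))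
          (Polynomial.X : Polynomial (Polynomial D))) ↔
    (Rfin n (A := D) v * kron1 Tp * kron2 Tp = kron2 Tp * kron1 Tp * Rfin n (A := D) v ∧
     Rfin n (A := D) v * kron1 Tm * kron2 Tm = kron2 Tm * kron1 Tm * Rfin n (A := D) v ∧
     Rfin n (A := D) v * kron1 Tm * kron2 Tp = kron2 Tp * kron1 Tm * Rfin n (A := D) v) := by
  have hcC : ∀ s : Matrix (Fin n × Fin n) (Fin n × Fin n) D,
      ((algebraMap k D ((v⁻¹ : kˣ) : k) - algebraMap k D (v : k)) •
        (1 : Matrix (Fin n × Fin n) (Fin n × Fin n) D)) * s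
      = s * ((algebraMap k D ((v⁻¹ : kˣ) : k) - algebraMap k D (v : k)) • 1) := by
    intro s
    have h := RTTAux.central (D := D) (((v⁻¹ : kˣ) : k) - (v : k)) s
    rw [map_sub] at h
    exact h
  rw [RTTAux.Rtrig_decomp, RTTAux.kron1_decomp, RTTAux.kron2_decomp]
  exact RTTAux.coreMM _ _ _ _ _ _ _ _ _ (RTTAux.RRi v) (RTTAux.RiR v) RTTAux.PP
    (RTTAux.AeqPRiP v) (RTTAux.hecke v) hcC (RTTAux.Pkron Tp) (RTTAux.Pkron Tm)
end
end

section
/- Let k be a field, v ∈ kˣ a unit, and A an associative unital k-algebra containing invertible elements W and D with D·W = v·W·D. Then the 2×2 trigonometric Lax matrix T(z) = [[z·W⁻¹ − v·W, z·W·D⁻¹],[−v·W·D, z·W]] has quantum determinant qdet T(z) = v⁻²·z². -/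
open Polynomial

noncomputable section

/-- The quantum determinant of a 2×2 matrix `T(z)` over `A[z]` (given as a function of the
substituted variable): `qdet T(z) = T(z)₁₁·T(v⁻²z)₂₂ − v⁻¹·T(z)₁₂·T(v⁻²z)₂₁`. -/
def qdet2 {A : Type*} [Ring A] (vinv : A)
    (T : Polynomial A → Matrix (Fin 2) (Fin 2) (Polynomial A)) : Polynomial A :=
  T Polynomial.X 0 0 * T (Polynomial.C (vinv * vinv) * Polynomial.X) 1 1 -
    Polynomial.C vinv * (T Polynomial.X 0 1 * T (Polynomial.C (vinv * vinv) * Polynomial.X) 1 0)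

lemma C_mul_C_mul {A : Type*} [Ring A] (x y : A) (p : Polynomial A) :
    Polynomial.C x * (Polynomial.C y * p) = Polynomial.C (x * y) * p := by
  rw [← mul_assoc, ← Polynomial.C_mul]

/-- The trigonometric Lax matrix `T(z) = [[z·W⁻¹ − v·W, z·W·D⁻¹],[−v·W·D, z·W]]`
has quantum determinant `v⁻²·z²`. -/
theorem qdet_trig_lax_case1 (k : Type*) [Field k] (v : kˣ)
    (A : Type*) [Ring A] [Algebra k A] (W Dd : Aˣ)
    (hWD : (Dd : A) * (W : A) = algebraMap k A (v : k) * ((W : A) * (Dd : A))) :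
    qdet2 (algebraMap k A ((v⁻¹ : kˣ) : k))
        (fun ζ =>
          !![ζ * Polynomial.C ((W⁻¹ : Aˣ) : A) -
               Polynomial.C (algebraMap k A (v : k) * (W : A)),
             ζ * Polynomial.C ((W : A) * ((Dd⁻¹ : Aˣ) : A));
             -Polynomial.C (algebraMap k A (v : k) * ((W : A) * (Dd : A))),
             ζ * Polynomial.C (W : A)]) =
      Polynomial.C (algebraMap k A ((v⁻¹ : kˣ) : k) * algebraMap k A ((v⁻¹ : kˣ) : k)) *
        Polynomial.X ^ 2 := by
  have I1 : ((W⁻¹ : Aˣ) : A) *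
      (algebraMap k A ((v⁻¹ : kˣ) : k) * (algebraMap k A ((v⁻¹ : kˣ) : k) * (W : A))) =
      algebraMap k A ((v⁻¹ : kˣ) : k) * algebraMap k A ((v⁻¹ : kˣ) : k) := by
    simp only [Algebra.commutes, mul_assoc, Units.inv_mul_cancel_left]
  have I2 : algebraMap k A (v : k) *
      ((W : A) * (algebraMap k A ((v⁻¹ : kˣ) : k) *
        (algebraMap k A ((v⁻¹ : kˣ) : k) * (W : A)))) =
      algebraMap k A ((v⁻¹ : kˣ) : k) *
        ((W : A) * (((Dd⁻¹ : Aˣ) : A) * (algebraMap k A (v : k) * ((W : A) * (Dd : A))))) := by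
    rw [← hWD, Units.inv_mul_cancel_left]
    simp only [Algebra.commutes, mul_assoc, ← map_mul]
    rw [Units.inv_mul, mul_one]
  simp only [qdet2, Matrix.cons_val', Matrix.cons_val_zero, Matrix.cons_val_one,
    Matrix.head_cons, Matrix.empty_val', Matrix.cons_val_fin_one, Matrix.head_fin_const,
    Matrix.of_apply]
  simp only [X_mul, mul_assoc, sub_mul, mul_sub, neg_mul, mul_neg, pow_two, C_mul_C_mul]
  rw [I1, I2]
  abel
end
end

section
/- Let k be a field, v ∈ kˣ a unit, and A an associative unital k-algebra containing invertible elements W and D with D·W = v·W·D. Then the 2×2 trigonometric Lax matrix T(z) = [[z·W⁻¹ − v·W, z·v⁻²·W⁻³·D⁻¹],[−v·W·D, −v⁻³·W⁻¹]] has quantum determinant qdet T(z) = v⁻². -/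
open Polynomial

noncomputable section

/-- The trigonometric Lax matrix `T(z) = [[z·W⁻¹ − v·W, z·v⁻²·W⁻³·D⁻¹],[−v·W·D, −v⁻³·W⁻¹]]`
has quantum determinant `v⁻²`. -/
theorem qdet_trig_lax_case3 (k : Type*) [Field k] (v : kˣ)
    (A : Type*) [Ring A] [Algebra k A] (W Dd : Aˣ)
    (hWD : (Dd : A) * (W : A) = algebraMap k A (v : k) * ((W : A) * (Dd : A))) :
    qdet2 (algebraMap k A ((v⁻¹ : kˣ) : k))
        (fun ζ =>
          !![ζ * Polynomial.C ((W⁻¹ : Aˣ) : A) -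
               Polynomial.C (algebraMap k A (v : k) * (W : A)),
             ζ * Polynomial.C (algebraMap k A ((v⁻¹ : kˣ) : k) * algebraMap k A ((v⁻¹ : kˣ) : k) * ((W⁻¹ : Aˣ) : A) ^ 3 * ((Dd⁻¹ : Aˣ) : A));
             -Polynomial.C (algebraMap k A (v : k) * ((W : A) * (Dd : A))),
             -Polynomial.C (algebraMap k A ((v⁻¹ : kˣ) : k) ^ 3 * ((W⁻¹ : Aˣ) : A))]) =
      Polynomial.C (algebraMap k A ((v⁻¹ : kˣ) : k) * algebraMap k A ((v⁻¹ : kˣ) : k)) := by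
  set a : A := algebraMap k A (v : k) with ha
  set ai : A := algebraMap k A ((v⁻¹ : kˣ) : k) with hai
  set w' : A := ((W⁻¹ : Aˣ) : A) with hw'
  set d' : A := ((Dd⁻¹ : Aˣ) : A) with hd'
  have movai : ∀ x y : A, x * (ai * y) = ai * (x * y) := fun x y => by
    rw [← mul_assoc, ← Algebra.commutes ((v⁻¹ : kˣ) : k) x, mul_assoc]
  have movai' : ∀ x : A, x * ai = ai * x := fun x =>
    (Algebra.commutes ((v⁻¹ : kˣ) : k) x).symm
  have cai : ∀ x : A, a * (ai * x) = x := fun x => by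
    rw [← mul_assoc, ha, hai, ← map_mul, Units.mul_inv, map_one, one_mul]
  have cai' : a * ai = 1 := by
    rw [ha, hai, ← map_mul, Units.mul_inv, map_one]
  have cia : ∀ x : A, ai * (a * x) = x := fun x => by
    rw [← mul_assoc, hai, ha, ← map_mul, Units.inv_mul, map_one, one_mul]
  have cia' : ai * a = 1 := by
    rw [hai, ha, ← map_mul, Units.inv_mul, map_one]
  have cW : ∀ x : A, (W : A) * (w' * x) = x := fun x => by
    rw [← mul_assoc, W.mul_inv, one_mul]
  have cW' : (W : A) * w' = 1 := W.mul_inv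
  have cw : ∀ x : A, w' * ((W : A) * x) = x := fun x => by
    rw [← mul_assoc, W.inv_mul, one_mul]
  have cw' : w' * (W : A) = 1 := W.inv_mul
  have cd : ∀ x : A, d' * ((Dd : A) * x) = x := fun x => by
    rw [← mul_assoc, Dd.inv_mul, one_mul]
  have cd' : d' * (Dd : A) = 1 := Dd.inv_mul
  -- element-level identities
  have e1 : a * ((W : A) * (ai ^ 3 * w')) = ai * ai := by
    simp only [pow_succ, pow_zero, one_mul, mul_assoc, movai, movai', cai, cai', cia, cia', cW, cW',
      mul_one]
  have e2 : ai * (ai * ai * w' ^ 3 * d' * ((Dd : A) * (W : A))) = w' * (ai ^ 3 * w') := by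
    simp only [pow_succ, pow_zero, one_mul, mul_assoc, movai, movai', cd, cd', cw, cw',
      mul_one]
  -- polynomial computation
  show (X * C w' - C (a * (W : A))) * (-C (ai ^ 3 * w')) -
      C ai * (X * C (ai * ai * w' ^ 3 * d') * (-C (a * ((W : A) * (Dd : A))))) = C (ai * ai)
  rw [← hWD]
  have hXC : ∀ c : A, X * C c = C c * X := fun c => X_mul
  have swapXC : ∀ (p : Polynomial A) (c : A), p * X * C c = p * C c * X := fun p c => by
    rw [mul_assoc, X_mul, mul_assoc]
  calc (X * C w' - C (a * (W : A))) * (-C (ai ^ 3 * w')) -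
      C ai * (X * C (ai * ai * w' ^ 3 * d') * (-C ((Dd : A) * (W : A))))
      = -(C w' * C (ai ^ 3 * w') * X) + C (a * (W : A)) * C (ai ^ 3 * w') +
        C ai * C (ai * ai * w' ^ 3 * d') * C ((Dd : A) * (W : A)) * X := by
        simp only [hXC, swapXC]
        noncomm_ring
        simp only [hXC]
        abel
    _ = C (ai * ai) := by
        simp only [← C_mul]
        rw [show a * (W : A) * (ai ^ 3 * w') = a * ((W : A) * (ai ^ 3 * w')) from mul_assoc _ _ _,
          e1, show ai * (ai * ai * w' ^ 3 * d') * ((Dd : A) * (W : A)) =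
            ai * (ai * ai * w' ^ 3 * d' * ((Dd : A) * (W : A))) from by rw [mul_assoc], e2]
        noncomm_ring
end
end

section
/- Let k be a field, v ∈ kˣ a unit, A an associative unital k-algebra containing invertible elements W and D with D·W = v·W·D, and x₁ ∈ kˣ. Then the 2×2 trigonometric Lax matrix T(z) = [[z·W⁻¹ − v·W, z·W·(1 − v⁻¹·x₁·W⁻²)·D⁻¹],[−v·W·D, z·W]] has quantum determinant qdet T(z) = v⁻²·z·(z − x₁). -/
open Polynomial

noncomputable section

lemma Xc {A : Type*} [Ring A] (r : A) (t : Polynomial A) :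
    Polynomial.X * (Polynomial.C r * t) = Polynomial.C r * (Polynomial.X * t) := by
  rw [← mul_assoc, Polynomial.X_mul_C, mul_assoc]

lemma Cc {A : Type*} [Ring A] (r s : A) (t : Polynomial A) :
    Polynomial.C r * (Polynomial.C s * t) = Polynomial.C (r * s) * t := by
  rw [← mul_assoc, ← Polynomial.C_mul]

/-- The trigonometric Lax matrix
`T(z) = [[z·W⁻¹ − v·W, z·W·(1 − v⁻¹·x₁·W⁻²)·D⁻¹],[−v·W·D, z·W]]`
has quantum determinant `v⁻²·z·(z − x₁)`. -/
theorem qdet_trig_lax_case4 (k : Type*) [Field k] (v : kˣ)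
    (A : Type*) [Ring A] [Algebra k A] (W Dd : Aˣ) (x₁ : kˣ)
    (hWD : (Dd : A) * (W : A) = algebraMap k A (v : k) * ((W : A) * (Dd : A))) :
    qdet2 (algebraMap k A ((v⁻¹ : kˣ) : k))
        (fun ζ =>
          !![ζ * Polynomial.C ((W⁻¹ : Aˣ) : A) -
               Polynomial.C (algebraMap k A (v : k) * (W : A)),
             ζ * Polynomial.C ((W : A) * (1 - algebraMap k A ((v⁻¹ : kˣ) : k) * algebraMap k A (x₁ : k) * ((W⁻¹ : Aˣ) : A) ^ 2) * ((Dd⁻¹ : Aˣ) : A));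
             -Polynomial.C (algebraMap k A (v : k) * ((W : A) * (Dd : A))),
             ζ * Polynomial.C (W : A)]) =
      Polynomial.C (algebraMap k A ((v⁻¹ : kˣ) : k) * algebraMap k A ((v⁻¹ : kˣ) : k)) *
        (Polynomial.X * (Polynomial.X - Polynomial.C (algebraMap k A (x₁ : k)))) := by
  unfold qdet2
  simp only [Matrix.of_apply, Matrix.cons_val_zero, Matrix.cons_val_one, Matrix.head_cons,
    Matrix.cons_val', Matrix.head_fin_const, Matrix.empty_val', Matrix.cons_val_fin_one]
  simp only [mul_assoc, sub_mul, mul_sub, neg_mul, mul_neg, neg_neg, mul_one, Polynomial.X_mul_C,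
    Xc, Cc]
  have hinner : ((Dd⁻¹ : Aˣ) : A) * (algebraMap k A (v : k) * ((W : A) * (Dd : A))) = (W : A) := by
    rw [← hWD, Units.inv_mul_cancel_left]
  rw [hinner]
  have ha1 : ((W⁻¹ : Aˣ) : A) * (algebraMap k A ((v⁻¹:kˣ):k) * (algebraMap k A ((v⁻¹:kˣ):k) * (W : A)))
      = algebraMap k A ((v⁻¹:kˣ):k) * algebraMap k A ((v⁻¹:kˣ):k) := by
    simp only [← Algebra.smul_def, Algebra.algebraMap_eq_smul_one, smul_mul_assoc,
      mul_smul_comm, smul_smul, Units.inv_mul, mul_one, one_mul]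
  have ha2 : algebraMap k A ((v:k)) * ((W : A) * (algebraMap k A ((v⁻¹:kˣ):k) * (algebraMap k A ((v⁻¹:kˣ):k) * (W : A))))
      = algebraMap k A ((v⁻¹:kˣ):k) * ((W : A) * (W : A)) := by
    simp only [← Algebra.smul_def, Algebra.algebraMap_eq_smul_one, smul_mul_assoc,
      mul_smul_comm, smul_smul, mul_one, one_mul]
    congr 1
    rw [Units.val_inv_eq_inv_val]
    field_simp
  have ha4 : algebraMap k A ((v⁻¹:kˣ):k) * ((W : A) * (algebraMap k A ((v⁻¹:kˣ):k) * (algebraMap k A ((x₁:kˣ):k) * (((W⁻¹ : Aˣ) : A) ^ 2 * (W : A)))))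
      = algebraMap k A ((v⁻¹:kˣ):k) * (algebraMap k A ((v⁻¹:kˣ):k) * algebraMap k A ((x₁:kˣ):k)) := by
    simp only [← Algebra.smul_def, Algebra.algebraMap_eq_smul_one, smul_mul_assoc,
      mul_smul_comm, smul_smul, pow_two, mul_assoc, Units.inv_mul, mul_one, one_mul,
      Units.mul_inv_cancel_left, Units.mul_inv]
  rw [ha1, ha2, ha4, sub_neg_eq_add, Polynomial.C_sub, sub_mul]
  abel
end
end

section
/- Let k be a field, v ∈ kˣ a unit, A an associative unital k-algebra containing invertible elements W and D with D·W = v·W·D, and x₁ ∈ kˣ. Then the 2×2 trigonometric Lax matrix T(z) = [[z·W⁻¹ − v·W, z·v⁻¹·W⁻¹·(1 − v⁻¹·x₁·W⁻²)·D⁻¹],[−v·W·D, v⁻³·W⁻¹·x₁]] has quantum determinant qdet T(z) = v⁻²·(z − x₁). -/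
open Polynomial

noncomputable section

private theorem qdet_poly_aux {A : Type*} [Ring A] (a b c e f g p q : A)
    (h1 : a*c + e*(f*g) = p) (h2 : b*c = p*q) :
    (X * C a - C b) * C c - C e * (X * C f * -C g) = C p * (X - C q) := by
  simp only [mul_neg, neg_mul, mul_assoc, X_mul, sub_mul, mul_sub, sub_neg_eq_add]
  simp only [← mul_assoc, ← C_mul]
  rw [← h2, ← h1, C_add, add_mul, mul_assoc e f g]
  abel

/-- The trigonometric Lax matrix
`T(z) = [[z·W⁻¹ − v·W, z·v⁻¹·W⁻¹·(1 − v⁻¹·x₁·W⁻²)·D⁻¹],[−v·W·D, v⁻³·W⁻¹·x₁]]`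
has quantum determinant `v⁻²·(z − x₁)`. -/
theorem qdet_trig_lax_case5 (k : Type*) [Field k] (v : kˣ)
    (A : Type*) [Ring A] [Algebra k A] (W Dd : Aˣ) (x₁ : kˣ)
    (hWD : (Dd : A) * (W : A) = algebraMap k A (v : k) * ((W : A) * (Dd : A))) :
    qdet2 (algebraMap k A ((v⁻¹ : kˣ) : k))
        (fun ζ =>
          !![ζ * Polynomial.C ((W⁻¹ : Aˣ) : A) -
               Polynomial.C (algebraMap k A (v : k) * (W : A)),
             ζ * Polynomial.C (algebraMap k A ((v⁻¹ : kˣ) : k) * ((W⁻¹ : Aˣ) : A) * (1 - algebraMap k A ((v⁻¹ : kˣ) : k) * algebraMap k A (x₁ : k) * ((W⁻¹ : Aˣ) : A) ^ 2) * ((Dd⁻¹ : Aˣ) : A));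
             -Polynomial.C (algebraMap k A (v : k) * ((W : A) * (Dd : A))),
             Polynomial.C (algebraMap k A ((v⁻¹ : kˣ) : k) ^ 3 * ((W⁻¹ : Aˣ) : A) * algebraMap k A (x₁ : k))]) =
      Polynomial.C (algebraMap k A ((v⁻¹ : kˣ) : k) * algebraMap k A ((v⁻¹ : kˣ) : k)) *
        (Polynomial.X - Polynomial.C (algebraMap k A (x₁ : k))) := by
  have hrel : ((Dd⁻¹:Aˣ):A) * (W:A) = ((v⁻¹:kˣ):k) • ((W:A) * (Dd⁻¹:Aˣ)) := by
    have h1 : ((Dd⁻¹:Aˣ):A) * ((Dd:A) * (W:A)) * (Dd⁻¹:Aˣ) = (W:A) * (Dd⁻¹:Aˣ) := by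
      simp [Units.inv_mul_cancel_left, mul_assoc]
    rw [hWD, ← Algebra.smul_def] at h1
    rw [← h1]
    simp [smul_smul, mul_assoc, mul_smul_comm, Units.mul_inv_cancel_left]
  have hrel2 : ∀ b : A, ((Dd⁻¹:Aˣ):A) * ((W:A) * b) = ((v⁻¹:kˣ):k) • ((W:A) * ((Dd⁻¹:Aˣ) * b)) := by
    intro b
    rw [← mul_assoc, hrel, smul_mul_assoc, mul_assoc]
  have h1 : ((W⁻¹:Aˣ):A) * (algebraMap k A (v⁻¹:kˣ) ^ 3 * (W⁻¹:Aˣ) * algebraMap k A (x₁:k)) +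
      algebraMap k A (v⁻¹:kˣ) *
        ((algebraMap k A (v⁻¹:kˣ) * (W⁻¹:Aˣ) *
            (1 - algebraMap k A (v⁻¹:kˣ) * algebraMap k A (x₁:k) * ((W⁻¹:Aˣ):A) ^ 2) * (Dd⁻¹:Aˣ)) *
          (algebraMap k A v * ((W:A) * Dd))) =
      algebraMap k A (v⁻¹:kˣ) * algebraMap k A (v⁻¹:kˣ) := by
    simp only [Algebra.algebraMap_eq_smul_one, _root_.smul_pow, one_pow, mul_sub, sub_mul, mul_one,
      one_mul, smul_mul_assoc, mul_smul_comm, smul_smul, Units.mul_inv, Units.inv_mul,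
      Units.mul_inv_cancel_left, Units.inv_mul_cancel_left, mul_assoc, hrel2, pow_two, smul_add,
      smul_sub]
    match_scalars <;> (push_cast; field_simp; try ring)
  have h2 : (algebraMap k A v * W) *
      (algebraMap k A (v⁻¹:kˣ) ^ 3 * (W⁻¹:Aˣ) * algebraMap k A (x₁:k)) =
      (algebraMap k A (v⁻¹:kˣ) * algebraMap k A (v⁻¹:kˣ)) * algebraMap k A (x₁:k) := by
    simp only [Algebra.algebraMap_eq_smul_one, _root_.smul_pow, one_pow, smul_mul_assoc, mul_smul_comm,
      smul_smul, one_mul, mul_one, Units.mul_inv, Units.inv_mul, Units.mul_inv_cancel_left,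
      Units.inv_mul_cancel_left]
    congr 1
    push_cast
    field_simp
  simp only [qdet2, Matrix.cons_val', Matrix.cons_val_zero, Matrix.cons_val_one,
    Matrix.head_cons, Matrix.empty_val', Matrix.cons_val_fin_one, Matrix.head_fin_const]
  exact qdet_poly_aux _ _ _ _ _ _ _ _ h1 h2
end
end

section
/- Let k be a field, v ∈ kˣ a unit, A an associative unital k-algebra containing invertible elements W and D with D·W = v·W·D, and x₁, x₂ ∈ kˣ. Then the 2×2 trigonometric Lax matrix T(z) = [[z·W⁻¹ − v·W, z·W·(1 − v⁻¹·x₁·W⁻²)·(1 − v⁻¹·x₂·W⁻²)·D⁻¹],[−v·W·D, z·W − v⁻³·W⁻¹·x₁·x₂]] has quantum determinant qdet T(z) = v⁻²·(z − x₁)·(z − x₂). -/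
open Polynomial

noncomputable section

private lemma X_mul_C_mul' {A : Type*} [Ring A] (a : A) (b : A[X]) :
    X * (C a * b) = C a * (X * b) := by
  rw [← mul_assoc, X_mul_C, mul_assoc]

private lemma poly_expand {A : Type*} [Ring A] (p q u r s vinv m t : A) :
    (X * C p - C q) * (C u * X * C r - C s) -
      C vinv * ((X * C m) * (-C t)) =
    C (p * (u * r)) * X ^ 2 + C (vinv * (m * t) - (p * s + q * (u * r))) * X + C (q * s) := by
  simp only [map_sub, map_add, map_mul]
  noncomm_ring
  simp only [X_mul_C_mul', X_mul_C]
  abel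

private lemma poly_rhs {A : Type*} [Ring A] (c x1 x2 : A) :
    C c * ((X - C x1) * (X - C x2)) =
    C c * X ^ 2 + C (-(c * (x1 + x2))) * X + C (c * (x1 * x2)) := by
  simp only [map_mul, map_add, map_neg]
  noncomm_ring
  simp only [X_mul_C_mul', X_mul_C]
  abel

/-- The trigonometric Lax matrix
`T(z) = [[z·W⁻¹ − v·W, z·W·(1 − v⁻¹·x₁·W⁻²)·(1 − v⁻¹·x₂·W⁻²)·D⁻¹],[−v·W·D, z·W − v⁻³·W⁻¹·x₁·x₂]]`
has quantum determinant `v⁻²·(z − x₁)·(z − x₂)`. -/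
theorem qdet_trig_lax_case6 (k : Type*) [Field k] (v : kˣ)
    (A : Type*) [Ring A] [Algebra k A] (W Dd : Aˣ) (x₁ x₂ : kˣ)
    (hWD : (Dd : A) * (W : A) = algebraMap k A (v : k) * ((W : A) * (Dd : A))) :
    qdet2 (algebraMap k A ((v⁻¹ : kˣ) : k))
        (fun ζ =>
          !![ζ * Polynomial.C ((W⁻¹ : Aˣ) : A) -
               Polynomial.C (algebraMap k A (v : k) * (W : A)),
             ζ * Polynomial.C ((W : A) * (1 - algebraMap k A ((v⁻¹ : kˣ) : k) * algebraMap k A (x₁ : k) * ((W⁻¹ : Aˣ) : A) ^ 2) *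
               (1 - algebraMap k A ((v⁻¹ : kˣ) : k) * algebraMap k A (x₂ : k) * ((W⁻¹ : Aˣ) : A) ^ 2) * ((Dd⁻¹ : Aˣ) : A));
             -Polynomial.C (algebraMap k A (v : k) * ((W : A) * (Dd : A))),
             ζ * Polynomial.C (W : A) -
               Polynomial.C (algebraMap k A ((v⁻¹ : kˣ) : k) ^ 3 * ((W⁻¹ : Aˣ) : A) * algebraMap k A (x₁ : k) * algebraMap k A (x₂ : k))]) =
      Polynomial.C (algebraMap k A ((v⁻¹ : kˣ) : k) * algebraMap k A ((v⁻¹ : kˣ) : k)) *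
        ((Polynomial.X - Polynomial.C (algebraMap k A (x₁ : k))) *
          (Polynomial.X - Polynomial.C (algebraMap k A (x₂ : k)))) := by
  set w : A := (W : A) with hw
  set wi : A := ((W⁻¹ : Aˣ) : A) with hwi
  set d : A := (Dd : A) with hd
  set di : A := ((Dd⁻¹ : Aˣ) : A) with hdi
  set vi : A := algebraMap k A ((v⁻¹ : kˣ) : k) with hvi
  set av : A := algebraMap k A (v : k) with hav
  set y1 : A := algebraMap k A ((x₁ : kˣ) : k) with hy1
  set y2 : A := algebraMap k A ((x₂ : kˣ) : k) with hy2
  -- the commutative subalgebra generated by w and wi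
  have hcomm : ∀ a ∈ ({w, wi} : Set A), ∀ b ∈ ({w, wi} : Set A), a * b = b * a := by
    have h1 : w * wi = wi * w := by simp [hw, hwi]
    rintro a (rfl|rfl) b (rfl|rfl) <;> simp_all
  set S := Algebra.adjoin k ({w, wi} : Set A) with hS
  letI : CommRing S := Algebra.adjoinCommRingOfComm k hcomm
  have hwS : w ∈ S := Algebra.subset_adjoin (by simp)
  have hwiS : wi ∈ S := Algebra.subset_adjoin (by simp)
  set W' : S := ⟨w, hwS⟩ with hW'
  set WI' : S := ⟨wi, hwiS⟩ with hWI'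
  have hmul : ∀ x y : S, ((x * y : S) : A) = (x : A) * (y : A) := fun x y => by
    with_unfolding_all rfl
  have hadd : ∀ x y : S, ((x + y : S) : A) = (x : A) + (y : A) := fun x y => by
    with_unfolding_all rfl
  have hsub : ∀ x y : S, ((x - y : S) : A) = (x : A) - (y : A) := fun x y => by
    with_unfolding_all rfl
  have hneg : ∀ x : S, ((-x : S) : A) = -(x : A) := fun x => by with_unfolding_all rfl
  have hone : ((1 : S) : A) = 1 := by with_unfolding_all rfl
  have hpow : ∀ (x : S) (n : ℕ), ((x ^ n : S) : A) = (x : A) ^ n := fun x n => by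
    induction n with
    | zero => simp [hone]
    | succ n ih => rw [pow_succ, pow_succ, hmul, ih]
  have halg : ∀ c : k, ((algebraMap k S c : S) : A) = algebraMap k A c := fun c => by
    with_unfolding_all rfl
  have hWc : ((W' : S) : A) = w := rfl
  have hWIc : ((WI' : S) : A) = wi := rfl
  -- basic facts in S
  have hx : W' * WI' = 1 := by
    apply Subtype.ext
    rw [hmul, hWc, hWIc, hone, hw, hwi]
    simp
  have hv' : algebraMap k S ((v⁻¹ : kˣ) : k) * algebraMap k S ((v : kˣ) : k) = 1 := by
    rw [← map_mul, Units.inv_mul, map_one]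
  set p : S := algebraMap k S ((v⁻¹ : kˣ) : k)
  set P : S := algebraMap k S ((v : kˣ) : k)
  set s1 : S := algebraMap k S ((x₁ : kˣ) : k)
  set s2 : S := algebraMap k S ((x₂ : kˣ) : k)
  -- the three coefficient identities, proved in S
  have H2 : WI' * (p * p * W') = p * p := by
    linear_combination (p * p) * hx
  have H0 : (P * W') * (p ^ 3 * WI' * s1 * s2) = p * p * (s1 * s2) := by
    linear_combination (P * p ^ 3 * s1 * s2) * hx + (p ^ 2 * s1 * s2) * hv'
  have H1 : p * (W' * (1 - p * s1 * WI' ^ 2) * (1 - p * s2 * WI' ^ 2) * W') -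
      (WI' * (p ^ 3 * WI' * s1 * s2) + (P * W') * (p * p * W')) =
      -(p * p * (s1 + s2)) := by
    linear_combination (-(p * W' ^ 2)) * hv' +
      ((p ^ 3 * s1 * s2 * WI' ^ 2 - p ^ 2 * (s1 + s2)) * (W' * WI' + 1)) * hx
  -- transfer to A
  have h2 : wi * (vi * vi * w) = vi * vi := by
    have := congrArg (Subtype.val) H2
    simpa only [p, P, s1, s2, hmul, hadd, hsub, hneg, hpow, hone, halg, hWc, hWIc] using this
  have h0 : (av * w) * (vi ^ 3 * wi * y1 * y2) = vi * vi * (y1 * y2) := by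
    have := congrArg (Subtype.val) H0
    simpa only [p, P, s1, s2, hmul, hadd, hsub, hneg, hpow, hone, halg, hWc, hWIc] using this
  have h1' : vi * (w * (1 - vi * y1 * wi ^ 2) * (1 - vi * y2 * wi ^ 2) * w) -
      (wi * (vi ^ 3 * wi * y1 * y2) + (av * w) * (vi * vi * w)) =
      -(vi * vi * (y1 + y2)) := by
    have := congrArg (Subtype.val) H1
    simpa only [p, P, s1, s2, hmul, hadd, hsub, hneg, hpow, hone, halg, hWc, hWIc] using this
  -- the D-commutation step
  have hmt : (w * (1 - vi * y1 * wi ^ 2) * (1 - vi * y2 * wi ^ 2) * di) * (av * (w * d)) =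
      w * (1 - vi * y1 * wi ^ 2) * (1 - vi * y2 * wi ^ 2) * w := by
    rw [mul_assoc (w * (1 - vi * y1 * wi ^ 2) * (1 - vi * y2 * wi ^ 2)) di, ← hWD,
      ← mul_assoc di d w]
    have : di * d = 1 := by rw [hdi, hd]; exact Units.inv_mul Dd
    rw [this, one_mul]
  have h1 : vi * ((w * (1 - vi * y1 * wi ^ 2) * (1 - vi * y2 * wi ^ 2) * di) * (av * (w * d))) -
      (wi * (vi ^ 3 * wi * y1 * y2) + (av * w) * (vi * vi * w)) =
      -(vi * vi * (y1 + y2)) := by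
    rw [hmt]; exact h1'
  -- now the polynomial computation
  simp only [qdet2, Matrix.of_apply, Matrix.cons_val', Matrix.cons_val_zero, Matrix.empty_val',
    Matrix.cons_val_fin_one, Matrix.cons_val_one, Matrix.head_cons, Matrix.head_fin_const]
  rw [poly_expand, poly_rhs, h2, h1, h0]
end
end

section
/- Let m ≥ 1, let w₁, …, w_m ∈ ℂ be pairwise distinct, let u₁, …, u_{m+1} ∈ ℂ, and let r' ≠ s' be two distinct indices in {1, …, m+1}. Assume w_k ≠ 1 + u_{s'} for every 1 ≤ k ≤ m. Then 1 + ∑_{k=1}^{m} [ ∏_{1 ≤ j ≤ m+1, j ≠ r'} (w_k − 1 − u_j) ] / [ ∏_{1 ≤ j ≤ m, j ≠ k} (w_k − w_j) · (1 + u_{s'} − w_k) ] = 0. -/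
open Finset Polynomial

lemma lagrange_coeff_sum {F : Type*} [Field F] {ι : Type*} [DecidableEq ι]
    (s : Finset ι) (v : ι → F) (hv : Set.InjOn v s)
    (f : Polynomial F) (hf : f.degree < #s) :
    f.coeff (#s - 1) = ∑ i ∈ s, f.eval (v i) * Lagrange.nodalWeight s v i := by
  conv_lhs => rw [Lagrange.eq_interpolate hv hf]
  rw [Lagrange.interpolate_apply, Polynomial.finset_sum_coeff]
  refine Finset.sum_congr rfl fun i hi => ?_
  have hb : Lagrange.basis s v i
      = Polynomial.C (Lagrange.nodalWeight s v i) * Lagrange.nodal (s.erase i) v := by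
    rw [Lagrange.basis_eq_prod_sub_inv_mul_nodal_div hi, Lagrange.nodal_erase_eq_nodal_div hi]
  have hd : (Lagrange.nodal (s.erase i) v).natDegree = #s - 1 := by
    rw [Lagrange.natDegree_nodal, Finset.card_erase_of_mem hi]
  rw [hb, Polynomial.coeff_C_mul, Polynomial.coeff_C_mul, ← hd,
    Lagrange.nodal_monic.coeff_natDegree, mul_one, mul_comm]

lemma erase_some_prod {α : Type*} [Fintype α] [DecidableEq α] (k : α) (g : Option α → ℂ) :
    ∏ j ∈ (Finset.univ : Finset (Option α)).erase (some k), g j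
      = g none * ∏ j ∈ Finset.univ.erase k, g (some j) := by
  have huniv : (Finset.univ : Finset (Option α)) = insert none (Finset.univ.image some) := by
    ext x; cases x <;> simp
  rw [huniv, Finset.erase_insert_of_ne (by simp), Finset.prod_insert (by simp),
    ← Finset.image_erase (Option.some_injective α) Finset.univ k,
    Finset.prod_image (fun a _ b _ h => Option.some_injective α h)]


/-- Simplification identity (1): for pairwise distinct `w₁,…,w_m`, any `u₁,…,u_{m+1}`,
distinct indices `r' ≠ s'` in `{1,…,m+1}`, and `w_k ≠ 1 + u_{s'}` for all `k`,
`1 + ∑_k  ∏_{j≠r'}(w_k − 1 − u_j) / ( ∏_{j≠k}(w_k − w_j) · (1 + u_{s'} − w_k) ) = 0`. -/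
theorem simplification_one (m : ℕ) (hm : 1 ≤ m)
    (w : Fin m → ℂ) (hw : Function.Injective w)
    (u : Fin (m + 1) → ℂ) (r' s' : Fin (m + 1)) (hrs : r' ≠ s')
    (hws : ∀ k, w k ≠ 1 + u s') :
    1 + ∑ k, (∏ j ∈ Finset.univ.erase r', (w k - 1 - u j)) /
        ((∏ j ∈ Finset.univ.erase k, (w k - w j)) * (1 + u s' - w k)) = 0 := by
  set v : Option (Fin m) → ℂ := fun o => o.elim (1 + u s') w with hv
  have hvinj : Function.Injective v := by
    intro a b hab
    cases a <;> cases b <;> simp [hv] at hab ⊢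
    · exact absurd hab.symm (hws _)
    · exact absurd hab (hws _)
    · exact hw hab
  set f : Polynomial ℂ := Lagrange.nodal (Finset.univ.erase r') (fun j => 1 + u j) with hf
  have hcard : #(Finset.univ : Finset (Option (Fin m))) = m + 1 := by simp
  have hcarde : #((Finset.univ : Finset (Fin (m+1))).erase r') = m := by simp
  have hdf : f.natDegree = m := by rw [hf, Lagrange.natDegree_nodal, hcarde]
  have key := lagrange_coeff_sum Finset.univ v hvinj.injOn f
    (by rw [hcard, Lagrange.degree_nodal, hcarde]; exact_mod_cast Nat.lt_succ_self m)
  have hc1 : f.coeff m = 1 := by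
    have h := (Lagrange.nodal_monic (s := Finset.univ.erase r')
      (v := fun j => (1:ℂ) + u j)).coeff_natDegree
    rwa [← hf, hdf] at h
  rw [hcard, Nat.add_sub_cancel, hc1, Fintype.sum_option] at key
  have hnone : f.eval (v none) = 0 := by
    rw [hf, Lagrange.eval_nodal]
    refine Finset.prod_eq_zero (Finset.mem_erase.mpr ⟨hrs.symm, Finset.mem_univ s'⟩) ?_
    simp [hv]
  rw [hnone, zero_mul, zero_add] at key
  have hterm : ∀ k : Fin m, f.eval (v (some k)) * Lagrange.nodalWeight Finset.univ v (some k)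
      = -((∏ j ∈ Finset.univ.erase r', (w k - 1 - u j)) /
        ((∏ j ∈ Finset.univ.erase k, (w k - w j)) * (1 + u s' - w k))) := by
    intro k
    rw [Lagrange.nodalWeight, erase_some_prod k (fun j => (v (some k) - v j)⁻¹)]
    have hQ : (∏ j ∈ Finset.univ.erase k, (w k - w j)) ≠ 0 := by
      refine Finset.prod_ne_zero_iff.mpr fun j hj => sub_ne_zero.mpr ?_
      exact fun h => (Finset.mem_erase.mp hj).1 (hw h).symm
    have hD : (1 + u s' - w k) ≠ 0 := sub_ne_zero.mpr fun h => (hws k) h.symm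
    have heval : f.eval (v (some k)) = ∏ j ∈ Finset.univ.erase r', (w k - 1 - u j) := by
      rw [hf, Lagrange.eval_nodal]
      exact Finset.prod_congr rfl fun j _ => by simp [hv]; ring
    rw [heval]
    simp only [hv, Option.elim]
    rw [Finset.prod_inv_distrib, show (w k - (1 + u s')) = -(1 + u s' - w k) by ring]
    field_simp
  rw [Finset.sum_congr rfl fun k _ => hterm k, Finset.sum_neg_distrib] at key
  linear_combination key
end

section
/- Let m ≥ 1, let w₁, …, w_m ∈ ℂ be pairwise distinct, let u₁, …, u_{m+1} ∈ ℂ, and let r' ∈ {1, …, m+1}. Assume u_{r'} ≠ w_k for every 1 ≤ k ≤ m. Then 1 + ∑_{k=1}^{m} [ ∏_{1 ≤ j ≤ m+1, j ≠ r'} (w_k − 1 − u_j) ] / [ ∏_{1 ≤ j ≤ m, j ≠ k} (w_k − w_j) · (u_{r'} − w_k) ] = [ ∏_{1 ≤ j ≤ m+1, j ≠ r'} (u_{r'} − 1 − u_j) ] / [ ∏_{k=1}^{m} (u_{r'} − w_k) ]. -/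
open Finset Polynomial

/-- Simplification identity (2): for pairwise distinct `w₁,…,w_m`, any `u₁,…,u_{m+1}`,
an index `r'` in `{1,…,m+1}`, and `u_{r'} ≠ w_k` for all `k`,
`1 + ∑_k ∏_{j≠r'}(w_k − 1 − u_j) / ( ∏_{j≠k}(w_k − w_j) · (u_{r'} − w_k) )
  = ∏_{j≠r'}(u_{r'} − 1 − u_j) / ∏_k (u_{r'} − w_k)`. -/
theorem simplification_two (m : ℕ) (hm : 1 ≤ m)
    (w : Fin m → ℂ) (hw : Function.Injective w)
    (u : Fin (m + 1) → ℂ) (r' : Fin (m + 1))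
    (hur : ∀ k, u r' ≠ w k) :
    1 + ∑ k, (∏ j ∈ Finset.univ.erase r', (w k - 1 - u j)) /
        ((∏ j ∈ Finset.univ.erase k, (w k - w j)) * (u r' - w k)) =
      (∏ j ∈ Finset.univ.erase r', (u r' - 1 - u j)) / ∏ k, (u r' - w k) := by
  classical
  set Q : ℂ[X] := ∏ j ∈ Finset.univ.erase r', (X - C (1 + u j)) with hQ
  set P : ℂ[X] := ∏ k : Fin m, (X - C (w k)) with hP
  have hQmonic : Q.Monic := monic_prod_of_monic _ _ fun j _ => monic_X_sub_C _
  have hPmonic : P.Monic := monic_prod_of_monic _ _ fun j _ => monic_X_sub_C _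
  have hcard : ((Finset.univ : Finset (Fin (m+1))).erase r').card = m := by
    simp [Finset.card_erase_of_mem]
  have hQdeg : Q.degree = m := by
    rw [hQ, degree_prod,
      Finset.sum_congr rfl (fun j _ => degree_X_sub_C (1 + u j))]
    simp [hcard]
  have hPdeg : P.degree = m := by
    rw [hP, degree_prod,
      Finset.sum_congr rfl (fun j _ => degree_X_sub_C (w j))]
    simp
  have hdeglt : (Q - P).degree < (Finset.univ : Finset (Fin m)).card := by
    rcases eq_or_ne Q P with h | h
    · rw [h, sub_self, degree_zero, Finset.card_univ, Fintype.card_fin]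
      exact WithBot.bot_lt_coe m
    · have := Polynomial.degree_sub_lt (hQdeg.trans hPdeg.symm) hQmonic.ne_zero
        (by rw [hQmonic.leadingCoeff, hPmonic.leadingCoeff])
      rw [hQdeg] at this
      simpa using this
  have hinj : Set.InjOn w (Finset.univ : Finset (Fin m)) := hw.injOn
  have hkey := Lagrange.eq_interpolate hinj hdeglt
  -- evaluate both sides at u r'
  have hPval : ∀ k : Fin m, P.eval (w k) = 0 := by
    intro k
    rw [hP, eval_prod]
    exact Finset.prod_eq_zero (Finset.mem_univ k) (by simp)
  have heval := congrArg (Polynomial.eval (u r')) hkey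
  rw [Lagrange.interpolate_apply, eval_finset_sum] at heval
  have heval' : Q.eval (u r') - P.eval (u r') =
      ∑ k : Fin m, Q.eval (w k) *
        ∏ j ∈ Finset.univ.erase k, ((w k - w j)⁻¹ * (u r' - w j)) := by
    rw [show Q.eval (u r') - P.eval (u r') = (Q - P).eval (u r') by simp, heval]
    refine Finset.sum_congr rfl fun k _ => ?_
    rw [eval_mul, eval_C, eval_sub, hPval k, sub_zero]
    congr 1
    rw [Lagrange.basis, eval_prod]
    refine Finset.prod_congr rfl fun j _ => ?_
    simp [Lagrange.basisDivisor]
  -- nonvanishing facts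
  have hne : ∀ k : Fin m, u r' - w k ≠ 0 := fun k => sub_ne_zero.mpr (hur k)
  have hprodne : (∏ k : Fin m, (u r' - w k)) ≠ 0 := Finset.prod_ne_zero_iff.mpr fun k _ => hne k
  have hwne : ∀ k j : Fin m, j ≠ k → w k - w j ≠ 0 := fun k j hjk =>
    sub_ne_zero.mpr fun h => hjk (hw h.symm)
  have hQevalu : Q.eval (u r') = ∏ j ∈ Finset.univ.erase r', (u r' - 1 - u j) := by
    rw [hQ, eval_prod]; refine Finset.prod_congr rfl fun j _ => ?_; simp; ring
  have hQevalw : ∀ k : Fin m, Q.eval (w k) = ∏ j ∈ Finset.univ.erase r', (w k - 1 - u j) := by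
    intro k
    rw [hQ, eval_prod]; refine Finset.prod_congr rfl fun j _ => ?_; simp; ring
  have hPevalu : P.eval (u r') = ∏ k : Fin m, (u r' - w k) := by
    rw [hP, eval_prod]; simp
  rw [sub_eq_iff_eq_add] at heval'
  rw [eq_div_iff hprodne, ← hQevalu]
  have hsplit : ∀ k : Fin m, (∏ i : Fin m, (u r' - w i)) =
      (u r' - w k) * ∏ j ∈ Finset.univ.erase k, (u r' - w j) :=
    fun k => (Finset.mul_prod_erase _ _ (Finset.mem_univ k)).symm
  calc (1 + ∑ k, (∏ j ∈ Finset.univ.erase r', (w k - 1 - u j)) /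
        ((∏ j ∈ Finset.univ.erase k, (w k - w j)) * (u r' - w k))) * ∏ k, (u r' - w k)
      = (∏ k : Fin m, (u r' - w k)) + ∑ k : Fin m,
          (∏ j ∈ Finset.univ.erase r', (w k - 1 - u j)) *
          ∏ j ∈ Finset.univ.erase k, ((w k - w j)⁻¹ * (u r' - w j)) := by
        rw [add_mul, one_mul, Finset.sum_mul]
        congr 1
        refine Finset.sum_congr rfl fun k _ => ?_
        rw [hsplit k, Finset.prod_mul_distrib]
        have hBne : (∏ j ∈ Finset.univ.erase k, (w k - w j)) ≠ 0 :=
          Finset.prod_ne_zero_iff.mpr fun j hj => hwne k j (Finset.mem_erase.mp hj).1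
        rw [Finset.prod_inv_distrib]
        have hck := hne k
        field_simp
    _ = Q.eval (u r') := by
        rw [heval', hPevalu, add_comm]
        congr 1
        exact Finset.sum_congr rfl fun k _ => by rw [hQevalw k]
end

section
/- Let m₋, m, m₊ ∈ ℕ with m ≥ 1; let b₁,…,b_{m₋} ∈ ℂ, let c₁,…,c_m ∈ ℂ be pairwise distinct, let d₁,…,d_{m₊} ∈ ℂ; fix indices r ∈ {1,…,m} and r₊, s₊ ∈ {1,…,m₊}, set δ := 1 if r₊ = s₊ and δ := 0 otherwise, and let Z ∈ ℂ[z] be any polynomial. Define P₋(z) := ∏_{j=1}^{m₋}(z−b_j), P_r(z) := ∏_{k≠r}(z−c_k), P(z) := ∏_{k=1}^m(z−c_k), P₊(z) := ∏_{t≠r₊}(z−d_t), and the rational functions Q₁(z) := P₊(z)·Z(z)·P(d_{s₊}−1+δ) / ( P_r(z−1)·(z−c_r−1)·(z−d_{s₊}−δ) ) and Q₂(z) := [ P₊(c_r+1)·P₋(c_r)·P_r(d_{s₊}−1+δ)·Z(c_r+1) / ( P_r(c_r)·P_r(c_r+1) ) ] · P_r(z) / ( P₋(z−1)·(z−c_r−1)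 ). Assume c_r + 1 ≠ d_{s₊} + δ, c_r ∉ {b₁,…,b_{m₋}}, and c_r + 1 ∉ {c_k : k ≠ r}. Then Res_{z = c_r+1} Q₁ + Res_{z = c_r+1} Q₂ = 0, i.e. lim_{z → c_r+1} (z − c_r − 1)·( Q₁(z) + Q₂(z) ) = 0; equivalently, the sum Q₁ + Q₂ is regular at z = c_r + 1. -/
open Finset Filter Polynomial

noncomputable section

private lemma aux_cancel (w x y : ℂ) (hw : w ≠ 0) : w * (x / (y * w)) = x / y := by
  rcases eq_or_ne y 0 with hy | hy
  · simp [hy]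
  · field_simp

/-- The residue-cancellation lemma underlying the polynomiality of the rational Lax
matrices. With `P₋(z) = ∏_j (z−b_j)`, `P(z) = ∏_k (z−c_k)`, `P_r(z) = ∏_{k≠r} (z−c_k)`,
`P₊(z) = ∏_{t≠r₊} (z−d_t)`, `δ = [r₊ = s₊]`, and
`Q₁(z) = P₊(z)·Z(z)·P(d_{s₊}−1+δ) / ( P_r(z−1)·(z−c_r−1)·(z−d_{s₊}−δ) )`,
`Q₂(z) = [ P₊(c_r+1)·P₋(c_r)·P_r(d_{s₊}−1+δ)·Z(c_r+1) / ( P_r(c_r)·P_r(c_r+1) ) ]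
          · P_r(z) / ( P₋(z−1)·(z−c_r−1) )`,
the sum of the residues of `Q₁` and `Q₂` at `z = c_r + 1` vanishes:
`lim_{z → c_r+1} (z − c_r − 1)·(Q₁(z) + Q₂(z)) = 0`. -/
theorem residue_cancellation (mminus mm mplus : ℕ) (hm : 1 ≤ mm)
    (b : Fin mminus → ℂ) (c : Fin mm → ℂ) (hc : Function.Injective c)
    (d : Fin mplus → ℂ) (r : Fin mm) (rp sp : Fin mplus) (Z : Polynomial ℂ)
    (h1 : c r + 1 ≠ d sp + (if rp = sp then (1 : ℂ) else 0))
    (h2 : ∀ j, c r ≠ b j)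
    (h3 : ∀ k, k ≠ r → c r + 1 ≠ c k) :
    Filter.Tendsto (fun z : ℂ =>
        (z - c r - 1) *
          ((∏ t ∈ Finset.univ.erase rp, (z - d t)) * Z.eval z *
              (∏ k, (d sp - 1 + (if rp = sp then (1 : ℂ) else 0) - c k)) /
              ((∏ k ∈ Finset.univ.erase r, (z - 1 - c k)) * (z - c r - 1) *
                (z - d sp - (if rp = sp then (1 : ℂ) else 0))) +
            (∏ t ∈ Finset.univ.erase rp, (c r + 1 - d t)) * (∏ j, (c r - b j)) *
                (∏ k ∈ Finset.univ.erase r, (d sp - 1 + (if rp = sp then (1 : ℂ) else 0) - c k)) *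
                Z.eval (c r + 1) /
                ((∏ k ∈ Finset.univ.erase r, (c r - c k)) *
                  (∏ k ∈ Finset.univ.erase r, (c r + 1 - c k))) *
                (∏ k ∈ Finset.univ.erase r, (z - c k)) /
              ((∏ j, (z - 1 - b j)) * (z - c r - 1))))
      (nhdsWithin (c r + 1) {c r + 1}ᶜ) (nhds 0) := by
  set δ : ℂ := if rp = sp then (1 : ℂ) else 0 with hδ
  have hd : c r + 1 - d sp - δ ≠ 0 := by
    rw [sub_sub]; exact sub_ne_zero.mpr h1
  have hPrc : (∏ k ∈ univ.erase r, (c r - c k)) ≠ 0 := by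
    rw [Finset.prod_ne_zero_iff]
    intro k hk
    exact sub_ne_zero.mpr fun h => (Finset.mem_erase.mp hk).1 (hc h).symm
  have hPra : (∏ k ∈ univ.erase r, (c r + 1 - c k)) ≠ 0 := by
    rw [Finset.prod_ne_zero_iff]
    intro k hk
    exact sub_ne_zero.mpr (h3 k (Finset.mem_erase.mp hk).1)
  have hPm : (∏ j, (c r - b j)) ≠ 0 := by
    rw [Finset.prod_ne_zero_iff]
    intro j _
    exact sub_ne_zero.mpr (h2 j)
  have e1 : (∏ k ∈ univ.erase r, (c r + 1 - 1 - c k)) = ∏ k ∈ univ.erase r, (c r - c k) :=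
    Finset.prod_congr rfl fun k _ => by ring
  have e2 : (∏ j, (c r + 1 - 1 - b j)) = ∏ j, (c r - b j) :=
    Finset.prod_congr rfl fun j _ => by ring
  have e3 : (∏ k, (d sp - 1 + δ - c k)) =
      (d sp - 1 + δ - c r) * ∏ k ∈ univ.erase r, (d sp - 1 + δ - c k) :=
    (Finset.mul_prod_erase univ _ (Finset.mem_univ r)).symm
  set g : ℂ → ℂ := fun z =>
    (∏ t ∈ univ.erase rp, (z - d t)) * Z.eval z * (∏ k, (d sp - 1 + δ - c k)) /
        ((∏ k ∈ univ.erase r, (z - 1 - c k)) * (z - d sp - δ)) +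
      (∏ t ∈ univ.erase rp, (c r + 1 - d t)) * (∏ j, (c r - b j)) *
          (∏ k ∈ univ.erase r, (d sp - 1 + δ - c k)) * Z.eval (c r + 1) /
          ((∏ k ∈ univ.erase r, (c r - c k)) * (∏ k ∈ univ.erase r, (c r + 1 - c k))) *
          (∏ k ∈ univ.erase r, (z - c k)) / (∏ j, (z - 1 - b j)) with hg
  have hga : g (c r + 1) = 0 := by
    simp only [hg, e1, e2, e3]
    field_simp
    ring
  have hcont : ContinuousAt g (c r + 1) := by
    apply ContinuousAt.add
    · apply ContinuousAt.div
      · exact (((continuous_finset_prod _ fun t _ => (continuous_id.sub continuous_const)).mul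
          Z.continuous).mul continuous_const).continuousAt
      · exact ((continuous_finset_prod _ fun k _ =>
          ((continuous_id.sub continuous_const).sub continuous_const)).mul
          ((continuous_id.sub continuous_const).sub continuous_const)).continuousAt
      · rw [e1]; exact mul_ne_zero hPrc hd
    · apply ContinuousAt.div
      · exact (continuous_const.mul (continuous_finset_prod _ fun k _ =>
          (continuous_id.sub continuous_const))).continuousAt
      · exact (continuous_finset_prod _ fun j _ =>
          ((continuous_id.sub continuous_const).sub continuous_const)).continuousAt
      · rw [e2]; exact hPm
  have hlim : Tendsto g (nhdsWithin (c r + 1) {c r + 1}ᶜ) (nhds 0) := by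
    rw [← hga]
    exact hcont.continuousWithinAt
  refine Tendsto.congr' ?_ hlim
  filter_upwards [self_mem_nhdsWithin] with z hz
  have hz' : z ≠ c r + 1 := hz
  have hw : z - c r - 1 ≠ 0 := by
    intro h
    exact hz' (by linear_combination h)
  simp only [hg, mul_add]
  rw [show (∏ k ∈ univ.erase r, (z - 1 - c k)) * (z - c r - 1) * (z - d sp - δ)
        = ((∏ k ∈ univ.erase r, (z - 1 - c k)) * (z - d sp - δ)) * (z - c r - 1) by ring,
      aux_cancel _ _ _ hw, aux_cancel _ _ _ hw]
end
end
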